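/- arXiv:1207.5920 — 13 statements merged into one kernel-verified Lean document; each statement's English description precedes it below -/
import Mathlib

section
/- For every ℓ > 0, every y > ℓ/2, and every integer n ≥ 2, the functions h_{n,ℓ} satisfy the recurrence relation h_{n,ℓ}(y) = (4·h_{n-1,ℓ}(y)³ + 2ℓ²·h_{n-1,ℓ}(y) + ℓ²·h_{n-2,ℓ}(y)) / (4·h_{n-2,ℓ}(y)·h_{n-1,ℓ}(y) − ℓ²); in particular the denominator 4·h_{n-2,ℓ}(y)·h_{n-1,ℓ}(y) − ℓ² is nonzero there. Moreover h_{0,ℓ}(y) = y and h_{1,ℓ}(y) = y + 4yℓ²/(4y² − ℓ²). -/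
/-- `h ℓ n y = ((2y+ℓ)^(2n+1) + (2y−ℓ)^(2n+1)) / (4·(4y²−ℓ²)^n)`. -/
noncomputable def catenoidH (ℓ : ℝ) (n : ℕ) (y : ℝ) : ℝ :=
  ((2*y + ℓ)^(2*n+1) + (2*y - ℓ)^(2*n+1)) / (4 * (4*y^2 - ℓ^2)^n)

lemma catenoid_key (ℓ a b A B : ℝ) (hab : a - b = 2*ℓ)
    (ha : 0 < a) (hb : 0 < b) (hA : 0 < A) (hB : 0 < B) :
    4 * ((A^2*a + B^2*b)/(4*(A*B))) * ((A^2*a^3 + B^2*b^3)/(4*(A*B*(a*b)))) - ℓ^2 ≠ 0 ∧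
    (A^2*a^5 + B^2*b^5)/(4*(A*B*(a*b)^2)) =
      (4*((A^2*a^3 + B^2*b^3)/(4*(A*B*(a*b))))^3
        + 2*ℓ^2*((A^2*a^3 + B^2*b^3)/(4*(A*B*(a*b))))
        + ℓ^2*((A^2*a + B^2*b)/(4*(A*B)))) /
      (4 * ((A^2*a + B^2*b)/(4*(A*B))) * ((A^2*a^3 + B^2*b^3)/(4*(A*B*(a*b)))) - ℓ^2) := by
  obtain rfl : ℓ = (a-b)/2 := by linarith
  have hA' : A ≠ 0 := ne_of_gt hA
  have hB' : B ≠ 0 := ne_of_gt hB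
  have ha' : a ≠ 0 := ne_of_gt ha
  have hb' : b ≠ 0 := ne_of_gt hb
  have hden : 4 * ((A^2*a + B^2*b)/(4*(A*B))) * ((A^2*a^3 + B^2*b^3)/(4*(A*B*(a*b)))) - ((a-b)/2)^2
      = ((A^2*a^2)^2 + (B^2*b^2)^2 + 2*(A*B*a*b)^2) / (4*(A^2*B^2*(a*b))) := by
    field_simp
    ring
  have hpos : 0 < ((A^2*a^2)^2 + (B^2*b^2)^2 + 2*(A*B*a*b)^2) / (4*(A^2*B^2*(a*b))) := by
    positivity
  rw [hden]
  refine ⟨ne_of_gt hpos, ?_⟩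
  rw [eq_div_iff (ne_of_gt hpos)]
  field_simp
  ring

theorem stmt_0 (ℓ : ℝ) (hℓ : 0 < ℓ) (y : ℝ) (hy : ℓ/2 < y) :
    (∀ n : ℕ, 2 ≤ n →
      4 * catenoidH ℓ (n-2) y * catenoidH ℓ (n-1) y - ℓ^2 ≠ 0 ∧
      catenoidH ℓ n y =
        (4 * (catenoidH ℓ (n-1) y)^3 + 2*ℓ^2 * catenoidH ℓ (n-1) y
          + ℓ^2 * catenoidH ℓ (n-2) y) /
        (4 * catenoidH ℓ (n-2) y * catenoidH ℓ (n-1) y - ℓ^2)) ∧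
    catenoidH ℓ 0 y = y ∧
    catenoidH ℓ 1 y = y + 4*y*ℓ^2 / (4*y^2 - ℓ^2) := by
  have ha : 0 < 2*y + ℓ := by linarith
  have hb : 0 < 2*y - ℓ := by linarith
  have hab : 4*y^2 - ℓ^2 = (2*y + ℓ) * (2*y - ℓ) := by ring
  refine ⟨?_, ?_, ?_⟩
  · intro n hn
    obtain ⟨m, rfl⟩ : ∃ m, n = m + 2 := ⟨n - 2, by omega⟩
    have hm2 : m + 2 - 2 = m := by omega
    have hm1 : m + 2 - 1 = m + 1 := by omega
    rw [hm2, hm1]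
    have e : ∀ k : ℕ, catenoidH ℓ (m + k) y =
        (((2*y+ℓ)^m)^2 * (2*y+ℓ)^(2*k+1) + ((2*y-ℓ)^m)^2 * (2*y-ℓ)^(2*k+1)) /
        (4*((2*y+ℓ)^m * (2*y-ℓ)^m * ((2*y+ℓ)*(2*y-ℓ))^k)) := by
      intro k
      have pw : ∀ x : ℝ, x^(2*(m+k)+1) = (x^m)^2 * x^(2*k+1) := by
        intro x
        rw [show 2*(m+k)+1 = m + m + (2*k+1) by ring, pow_add, pow_add, sq]
      unfold catenoidH
      rw [hab, pw, pw, pow_add]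
      simp only [mul_pow]
      ring
    have e0 := e 0
    have e1 := e 1
    have e2 := e 2
    norm_num at e0 e1 e2
    rw [show m + 2 = m + 2 from rfl] at e2
    rw [e0, e1, e2]
    exact catenoid_key ℓ (2*y+ℓ) (2*y-ℓ) ((2*y+ℓ)^m) ((2*y-ℓ)^m)
      (by ring) ha hb (pow_pos ha m) (pow_pos hb m)
  · simp [catenoidH]
    ring
  · have h4 : 4*y^2 - ℓ^2 ≠ 0 := by rw [hab]; positivity
    unfold catenoidH
    rw [pow_one]
    field_simp
    have h4' : y ^ 2 * 4 - ℓ ^ 2 ≠ 0 := by rwa [mul_comm]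
    field_simp
    ring
end

section
/- For every ℓ > 0, every y > ℓ/2, and every n ∈ ℕ, one has h_{n,ℓ}(y) = y · V_n(1 + 2ℓ²/(4y² − ℓ²)), where V_n is the n-th Chebyshev polynomial of the third kind. -/
/-- Chebyshev polynomials of the third kind, as real functions. -/
noncomputable def chebyshevV : ℕ → ℝ → ℝ
  | 0, _ => 1
  | 1, x => 2*x - 1
  | (n+2), x => 2*x * chebyshevV (n+1) x - chebyshevV n x

theorem stmt_2 (ℓ : ℝ) (hℓ : 0 < ℓ) (y : ℝ) (hy : ℓ/2 < y) (n : ℕ) :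
    catenoidH ℓ n y = y * chebyshevV n (1 + 2*ℓ^2 / (4*y^2 - ℓ^2)) := by
  have hy0 : 0 < y := lt_trans (by positivity) hy
  have hD : (4*y^2 - ℓ^2) ≠ 0 := by nlinarith
  have hD' : (y^2*4 - ℓ^2) ≠ 0 := by nlinarith
  induction n using Nat.twoStepInduction with
  | zero =>
    simp only [catenoidH, chebyshevV]
    norm_num
    ring
  | one =>
    simp only [catenoidH, chebyshevV]
    field_simp
    ring
  | more n ih1 ih2 =>
    have hrec : catenoidH ℓ (n+2) y
        = 2*(1 + 2*ℓ^2 / (4*y^2 - ℓ^2)) * catenoidH ℓ (n+1) y - catenoidH ℓ n y := by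
      simp only [catenoidH]
      have hDn : (4*y^2 - ℓ^2)^n ≠ 0 := pow_ne_zero _ hD
      field_simp
      ring
    rw [hrec, ih1, ih2, show n+2 = n+1+1 from rfl, chebyshevV]
    ring
end

section
/- For every n ∈ ℕ and every real x, the terminating Gauss hypergeometric sum F(n+1, −n; 1/2; −x²) has the closed form: Σ_{i=0}^{n} 4^i · (n+i)! / ((n−i)! · (2i)!) · x^{2i} = ((√(1+x²) + x)^{2n+1} + (√(1+x²) − x)^{2n+1}) / (2·√(1+x²)). -/
open Finset

noncomputable def cc (n i : ℕ) : ℝ :=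
  4^i * (Nat.factorial (n+i)) / ((Nat.factorial (n-i)) * Nat.factorial (2*i))

noncomputable def DD (n i : ℕ) : ℝ := if i ≤ n then cc n i else 0

open Nat in
lemma coef_rec (j k : ℕ) :
    (4:ℝ)^(k+1) * (2*k+j+4)! / ((j+2)! * (2*k+2)!)
      = 2 * ((4:ℝ)^(k+1) * (2*k+j+3)! / ((j+1)! * (2*k+2)!))
        + 4 * ((4:ℝ)^k * (2*k+j+2)! / ((j+2)! * (2*k)!))
        - (4:ℝ)^(k+1) * (2*k+j+2)! / ((j)! * (2*k+2)!) := by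
  have h1 : ((2*k+j+4)! : ℝ) = (2*k+j+4) * ((2*k+j+3) * (2*k+j+2)!) := by
    rw [show 2*k+j+4 = (2*k+j+2)+1+1 by ring, Nat.factorial_succ, Nat.factorial_succ]
    push_cast; ring
  have h1' : ((2*k+j+3)! : ℝ) = (2*k+j+3) * (2*k+j+2)! := by
    rw [show 2*k+j+3 = (2*k+j+2)+1 by ring, Nat.factorial_succ]; push_cast; ring
  have h2 : ((j+2)! : ℝ) = (j+2) * ((j+1) * (j)!) := by
    rw [Nat.factorial_succ, Nat.factorial_succ]; push_cast; ring
  have h2' : ((j+1)! : ℝ) = (j+1) * (j)! := by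
    rw [Nat.factorial_succ]; push_cast; ring
  have h3 : ((2*k+2)! : ℝ) = (2*k+2) * ((2*k+1) * (2*k)!) := by
    rw [show 2*k+2 = (2*k)+1+1 by ring, Nat.factorial_succ, Nat.factorial_succ]
    push_cast; ring
  have hj : ((j)! : ℝ) ≠ 0 := by positivity
  have hk : (((2*k)!) : ℝ) ≠ 0 := by positivity
  rw [h1, h1', h2, h2', h3]
  field_simp
  ring

lemma cc_zero (n : ℕ) : cc n 0 = 1 := by
  simp [cc, Nat.factorial]
  exact Nat.factorial_ne_zero n

lemma cc_diag (n : ℕ) : cc n n = 4^n := by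
  have : (((2*n).factorial : ℝ)) ≠ 0 := by positivity
  simp only [cc, Nat.sub_self, Nat.factorial, Nat.cast_one, one_mul, two_mul]
  rw [mul_div_assoc, div_self (by positivity), mul_one]

lemma key (n i : ℕ) :
    DD (n+2) i = 2 * DD (n+1) i + 4 * (if i = 0 then 0 else DD (n+1) (i-1)) - DD n i := by
  rcases i with _ | k
  · simp [DD, cc_zero]; ring
  · rcases lt_or_ge n (k+1) with h | h
    · rcases Nat.lt_or_ge (n+2) (k+1) with h2 | h2
      · -- k+1 > n+2 : everything 0
        have : ¬ (k+1 ≤ n+2) := by omega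
        have h3 : ¬ (k+1 ≤ n+1) := by omega
        have h4 : ¬ (k ≤ n+1) := by omega
        have h5 : ¬ (k+1 ≤ n) := by omega
        simp [DD, this, h3, h4, h5]
      · rcases Nat.eq_or_lt_of_le h2 with h2e | h2l
        · -- k+1 = n+2, i.e. k = n+1
          have hk : k = n+1 := by omega
          subst hk
          have g1 : n+2 ≤ n+2 := le_refl _
          have g2 : ¬ (n+2 ≤ n+1) := by omega
          have g3 : n+1 ≤ n+1 := le_refl _
          have g4 : ¬ (n+2 ≤ n) := by omega
          simp only [DD, if_pos g1, if_neg g2, if_pos g3, if_neg g4, Nat.succ_ne_zero,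
            Nat.add_sub_cancel, if_false]
          rw [cc_diag, cc_diag]
          ring
        · -- k+1 = n+1, i.e. k = n
          have hk : k = n := by omega
          subst hk
          have g1 : k+1 ≤ k+2 := by omega
          have g2 : ¬ (k+1 ≤ k) := by omega
          have g3 : k ≤ k+1 := by omega
          have g4 : ¬ (k+1 ≤ k) := by omega
          simp only [DD, if_pos g1, if_neg g2, if_pos g3, if_neg g4, Nat.succ_ne_zero,
            Nat.add_sub_cancel, if_false]
          have e1 : k+2 + (k+1) = 2*k+3 := by omega
          have e2 : k+2 - (k+1) = 1 := by omega
          have e3 : k+1 + k = 2*k+1 := by omega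
          have e4 : k+1 - k = 1 := by omega
          have e5 : 2*(k+1) = 2*k+2 := by omega
          have e6 : k+1+(k+1) = 2*k+2 := by omega
          have e7 : k+1-(k+1) = 0 := by omega
          simp only [le_refl, ite_true, cc, e1, e2, e3, e4, e5, e6, e7, Nat.factorial_zero,
            Nat.cast_one, one_mul]
          have f1 : ((2*k+3).factorial : ℝ) = (2*k+3) * (2*k+2).factorial := by
            rw [show 2*k+3 = (2*k+2)+1 by ring, Nat.factorial_succ]; push_cast; ring
          have f2 : ((2*k+1).factorial : ℝ) = (2*k+1) * (2*k).factorial := by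
            rw [show 2*k+1 = (2*k)+1 by ring, Nat.factorial_succ]; push_cast; ring
          have f3 : ((2*k+2).factorial : ℝ) = (2*k+2) * (2*k+1) * (2*k).factorial := by
            rw [show 2*k+2 = (2*k)+1+1 by ring, Nat.factorial_succ, Nat.factorial_succ]
            push_cast; ring
          have hk0 : (((2*k).factorial) : ℝ) ≠ 0 := by positivity
          rw [f1, f3, f2]
          simp only [Nat.factorial_one, Nat.cast_one, one_mul]
          field_simp
          ring
    · -- 1 ≤ k+1 ≤ n : main case
      obtain ⟨j, rfl⟩ : ∃ j, n = k+1+j := ⟨n - (k+1), by omega⟩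
      have g1 : k+1 ≤ k+1+j+2 := by omega
      have g2 : k+1 ≤ k+1+j+1 := by omega
      have g3 : k ≤ k+1+j+1 := by omega
      have g4 : k+1 ≤ k+1+j := by omega
      simp only [DD, if_pos g1, if_pos g2, if_pos g3, if_pos g4, Nat.succ_ne_zero, if_neg,
        Nat.add_sub_cancel]
      have e1 : k+1+j+2 + (k+1) = 2*k+j+4 := by omega
      have e2 : k+1+j+2 - (k+1) = j+2 := by omega
      have e3 : k+1+j+1 + (k+1) = 2*k+j+3 := by omega
      have e4 : k+1+j+1 - (k+1) = j+1 := by omega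
      have e5 : k+1+j+1 + k = 2*k+j+2 := by omega
      have e6 : k+1+j+1 - k = j+2 := by omega
      have e7 : k+1+j + (k+1) = 2*k+j+2 := by omega
      have e8 : k+1+j - (k+1) = j := by omega
      have e9 : 2*(k+1) = 2*k+2 := by omega
      simp only [cc, e1, e2, e3, e4, e5, e6, e7, e8, e9]
      exact coef_rec j k

lemma DD_top (n i : ℕ) (h : n < i) : DD n i = 0 := by simp [DD, Nat.not_le.mpr h]

lemma shift_sum (n : ℕ) (x : ℝ) :
    x^2 * ∑ i ∈ range (n+3), DD (n+1) i * x^(2*i)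
      = ∑ i ∈ range (n+3), (if i = 0 then 0 else DD (n+1) (i-1)) * x^(2*i) := by
  rw [Finset.sum_range_succ' (fun i => (if i = 0 then 0 else DD (n+1) (i-1)) * x^(2*i)) (n+2)]
  rw [Finset.sum_range_succ (fun i => DD (n+1) i * x^(2*i)) (n+2)]
  rw [DD_top (n+1) (n+2) (by omega)]
  simp only [Nat.succ_ne_zero, ite_false, ite_true, eq_self_iff_true, Nat.add_sub_cancel,
    zero_mul, mul_zero, add_zero, zero_add]
  rw [Finset.mul_sum]
  apply Finset.sum_congr rfl
  intro i _
  rw [show 2*(i+1) = 2*i + 2 by ring, pow_add]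
  ring

lemma S_rec (n : ℕ) (x : ℝ) :
    ∑ i ∈ range (n+3), DD (n+2) i * x^(2*i)
      = (2 + 4*x^2) * (∑ i ∈ range (n+2), DD (n+1) i * x^(2*i))
        - ∑ i ∈ range (n+1), DD n i * x^(2*i) := by
  have ext1 : ∑ i ∈ range (n+2), DD (n+1) i * x^(2*i)
      = ∑ i ∈ range (n+3), DD (n+1) i * x^(2*i) := by
    rw [Finset.sum_range_succ (fun i => DD (n+1) i * x^(2*i)) (n+2),
      DD_top (n+1) (n+2) (by omega)]
    ring
  have ext2 : ∑ i ∈ range (n+1), DD n i * x^(2*i)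
      = ∑ i ∈ range (n+3), DD n i * x^(2*i) := by
    rw [Finset.sum_range_succ (fun i => DD n i * x^(2*i)) (n+2),
      Finset.sum_range_succ (fun i => DD n i * x^(2*i)) (n+1),
      DD_top n (n+2) (by omega), DD_top n (n+1) (by omega)]
    ring
  rw [ext1, ext2]
  have expand : (2 + 4*x^2) * (∑ i ∈ range (n+3), DD (n+1) i * x^(2*i))
      = 2 * (∑ i ∈ range (n+3), DD (n+1) i * x^(2*i))
        + 4 * (x^2 * ∑ i ∈ range (n+3), DD (n+1) i * x^(2*i)) := by ring
  rw [expand, shift_sum, Finset.mul_sum, Finset.mul_sum, ← Finset.sum_add_distrib,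
    ← Finset.sum_sub_distrib]
  apply Finset.sum_congr rfl
  intro i _
  rw [key n i]
  ring

lemma R_rec (n : ℕ) (x : ℝ) :
    ((Real.sqrt (1 + x^2) + x)^(2*(n+2)+1) + (Real.sqrt (1 + x^2) - x)^(2*(n+2)+1)) /
        (2 * Real.sqrt (1 + x^2))
      = (2 + 4*x^2) *
          (((Real.sqrt (1 + x^2) + x)^(2*(n+1)+1) + (Real.sqrt (1 + x^2) - x)^(2*(n+1)+1)) /
            (2 * Real.sqrt (1 + x^2)))
        - ((Real.sqrt (1 + x^2) + x)^(2*n+1) + (Real.sqrt (1 + x^2) - x)^(2*n+1)) /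
            (2 * Real.sqrt (1 + x^2)) := by
  set s := Real.sqrt (1 + x^2) with hs
  have hspos : 0 < s := Real.sqrt_pos.mpr (by positivity)
  have hs2 : s^2 = 1 + x^2 := Real.sq_sqrt (by positivity)
  have hab : (s + x) * (s - x) = 1 := by linear_combination hs2
  have hsum : (s + x)^2 + (s - x)^2 = 2 + 4*x^2 := by linear_combination 2*hs2
  have hnum : (s + x)^(2*(n+2)+1) + (s - x)^(2*(n+2)+1)
      = (2 + 4*x^2) * ((s + x)^(2*(n+1)+1) + (s - x)^(2*(n+1)+1))
        - ((s + x)^(2*n+1) + (s - x)^(2*n+1)) := by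
    have hid : ∀ a b : ℝ, a^(2*n+1+4) + b^(2*n+1+4)
        = (a^2 + b^2) * (a^(2*n+1+2) + b^(2*n+1+2)) - (a*b)^2 * (a^(2*n+1) + b^(2*n+1)) := by
      intro a b; ring
    have := hid (s + x) (s - x)
    rw [hab, hsum] at this
    rw [show 2*(n+2)+1 = 2*n+1+4 by ring, show 2*(n+1)+1 = 2*n+1+2 by ring, this]
    ring
  rw [hnum]
  field_simp

theorem stmt_3' (n : ℕ) (x : ℝ) :
    ∑ i ∈ range (n+1), DD n i * x^(2*i)
      = ((Real.sqrt (1 + x^2) + x)^(2*n+1) + (Real.sqrt (1 + x^2) - x)^(2*n+1)) /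
        (2 * Real.sqrt (1 + x^2)) := by
  have hspos : 0 < Real.sqrt (1 + x^2) := Real.sqrt_pos.mpr (by positivity)
  have hs2 : (Real.sqrt (1 + x^2))^2 = 1 + x^2 := Real.sq_sqrt (by positivity)
  induction n using Nat.twoStepInduction with
  | zero =>
    simp only [zero_add, Finset.sum_range_one, mul_zero, pow_zero, mul_one]
    simp only [DD, if_pos (le_refl 0), cc_zero, Nat.mul_zero]
    rw [eq_div_iff (by positivity)]
    ring
  | one =>
    rw [show (1:ℕ)+1 = 2 by rfl]
    rw [Finset.sum_range_succ, Finset.sum_range_one]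
    simp only [DD, if_pos (by omega : (0:ℕ) ≤ 1), if_pos (le_refl 1), cc_zero, cc_diag]
    rw [eq_div_iff (by positivity)]
    ring_nf
    linear_combination (-2*Real.sqrt (1+x^2)) * hs2
  | more m ih1 ih2 =>
    rw [show m+2+1 = m+3 by ring, S_rec, ih1, ih2, ← R_rec]

theorem stmt_3 (n : ℕ) (x : ℝ) :
    ∑ i ∈ range (n+1),
        (4:ℝ)^i * (Nat.factorial (n+i)) / ((Nat.factorial (n-i)) * Nat.factorial (2*i))
          * x^(2*i)
      = ((Real.sqrt (1 + x^2) + x)^(2*n+1) + (Real.sqrt (1 + x^2) - x)^(2*n+1)) /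
        (2 * Real.sqrt (1 + x^2)) := by
  rw [← stmt_3' n x]
  apply Finset.sum_congr rfl
  intro i hi
  rw [Finset.mem_range] at hi
  rw [DD, if_pos (by omega : i ≤ n), cc]
end

section
/- For every ℓ > 0, every y > ℓ/2, and every n ∈ ℕ, one has h_{n,ℓ}(y) = Σ_{i=0}^{n} 4^i · (n+i)! / ((n−i)! · (2i)!) · ℓ^{2i} · y / (4y² − ℓ²)^i. -/
open Finset

noncomputable def catS (D p : ℝ) (m : ℕ) : ℝ :=
  ∑ i ∈ range (m+1), (Nat.choose (m+i) (2*i) : ℝ) * D^i * p^(m-i)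

lemma chooseId (m k : ℕ) :
    (m+2).choose (k+2) + m.choose (k+2) = m.choose k + 2 * (m+1).choose (k+2) := by
  rw [show m+2 = (m+1)+1 from rfl, Nat.choose_succ_succ (m+1) (k+1),
    Nat.choose_succ_succ m k, Nat.choose_succ_succ m (k+1)]
  ring

lemma Srec (D p : ℝ) (n : ℕ) :
    catS D p (n+2) = (D + 2*p) * catS D p (n+1) - p^2 * catS D p n := by
  have hL : catS D p (n+2)
      = (∑ i ∈ range (n+2), ((n+3+i).choose (2*i+2) : ℝ) * (D^(i+1) * p^(n+1-i)))
        + p^(n+2) := by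
    rw [catS, Finset.sum_range_succ']
    simp only [Nat.add_zero, Nat.mul_zero, Nat.choose_zero_right, Nat.cast_one, pow_zero,
      one_mul, mul_one, Nat.sub_zero]
    congr 1
    apply Finset.sum_congr rfl
    intro i hi
    rw [show n+2+(i+1) = n+3+i by omega, show 2*(i+1) = 2*i+2 by omega,
      show n+2-(i+1) = n+1-i by omega, mul_assoc]
  have hD : D * catS D p (n+1)
      = ∑ i ∈ range (n+2), ((n+1+i).choose (2*i) : ℝ) * (D^(i+1) * p^(n+1-i)) := by
    rw [catS, Finset.mul_sum]
    apply Finset.sum_congr rfl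
    intro i hi
    ring
  have hP : 2*p * catS D p (n+1)
      = (∑ i ∈ range (n+2), 2*((n+2+i).choose (2*i+2) : ℝ) * (D^(i+1) * p^(n+1-i)))
        + 2*p^(n+2) := by
    rw [catS, Finset.sum_range_succ']
    rw [Finset.sum_range_succ _ (n+1)]
    rw [show (n+2+(n+1)).choose (2*(n+1)+2) = 0 from Nat.choose_eq_zero_of_lt (by omega)]
    simp only [Nat.cast_zero, mul_zero, zero_mul, add_zero]
    rw [mul_add, Finset.mul_sum]
    congr 1
    · apply Finset.sum_congr rfl
      intro i hi
      simp only [Finset.mem_range] at hi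
      rw [show n+1+(i+1) = n+2+i by omega, show 2*(i+1) = 2*i+2 by omega,
        show n+1-(i+1) = n-i by omega, show n+1-i = (n-i)+1 by omega]
      ring
    · simp only [Nat.add_zero, Nat.mul_zero, Nat.choose_zero_right, Nat.cast_one, pow_zero,
        one_mul, mul_one, Nat.sub_zero]
      rw [show n+2 = (n+1)+1 by omega]
      ring
  have hQ : p^2 * catS D p n
      = (∑ i ∈ range (n+2), ((n+1+i).choose (2*i+2) : ℝ) * (D^(i+1) * p^(n+1-i)))
        + p^(n+2) := by
    rw [catS, Finset.sum_range_succ']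
    rw [Finset.sum_range_succ _ (n+1), Finset.sum_range_succ _ n]
    rw [show (n+1+(n+1)).choose (2*(n+1)+2) = 0 from Nat.choose_eq_zero_of_lt (by omega)]
    rw [show (n+1+n).choose (2*n+2) = 0 from Nat.choose_eq_zero_of_lt (by omega)]
    simp only [Nat.cast_zero, mul_zero, zero_mul, add_zero]
    rw [mul_add, Finset.mul_sum]
    congr 1
    · apply Finset.sum_congr rfl
      intro i hi
      simp only [Finset.mem_range] at hi
      rw [show n+(i+1) = n+1+i by omega, show 2*(i+1) = 2*i+2 by omega,
        show n-(i+1) = n-1-i by omega, show n+1-i = (n-1-i)+2 by omega]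
      ring
    · simp only [Nat.add_zero, Nat.mul_zero, Nat.choose_zero_right, Nat.cast_one, pow_zero,
        one_mul, mul_one, Nat.sub_zero]
      ring
  have hsum : (∑ i ∈ range (n+2), ((n+3+i).choose (2*i+2) : ℝ) * (D^(i+1) * p^(n+1-i)))
      + (∑ i ∈ range (n+2), ((n+1+i).choose (2*i+2) : ℝ) * (D^(i+1) * p^(n+1-i)))
      = (∑ i ∈ range (n+2), ((n+1+i).choose (2*i) : ℝ) * (D^(i+1) * p^(n+1-i)))
      + (∑ i ∈ range (n+2), 2*((n+2+i).choose (2*i+2) : ℝ) * (D^(i+1) * p^(n+1-i))) := by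
    rw [← Finset.sum_add_distrib, ← Finset.sum_add_distrib]
    apply Finset.sum_congr rfl
    intro i _
    have h := chooseId (n+1+i) (2*i)
    rw [show n+1+i+2 = n+3+i by omega, show n+1+i+1 = n+2+i by omega] at h
    have h' : ((n+3+i).choose (2*i+2) : ℝ) + ((n+1+i).choose (2*i+2) : ℝ)
        = ((n+1+i).choose (2*i) : ℝ) + 2*((n+2+i).choose (2*i+2) : ℝ) := by
      exact_mod_cast congrArg (Nat.cast : ℕ → ℝ) h
    linear_combination (D^(i+1) * p^(n+1-i)) * h'
  have expand : (D + 2*p) * catS D p (n+1) - p^2 * catS D p n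
      = D * catS D p (n+1) + 2*p * catS D p (n+1) - p^2 * catS D p n := by ring
  rw [expand, hL, hD, hP, hQ]
  linarith [hsum]

lemma keyA (x t : ℝ) (n : ℕ) :
    (x+t)^(2*n+1) + (x-t)^(2*n+1) = 2*x * catS (4*t^2) (x^2-t^2) n := by
  have main : ∀ m : ℕ,
      ((x+t)^(2*m+1) + (x-t)^(2*m+1) = 2*x * catS (4*t^2) (x^2-t^2) m) ∧
      ((x+t)^(2*(m+1)+1) + (x-t)^(2*(m+1)+1) = 2*x * catS (4*t^2) (x^2-t^2) (m+1)) := by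
    intro m
    induction m with
    | zero =>
      constructor
      · simp [catS]; ring
      · rw [catS]
        rw [Finset.sum_range_succ, Finset.sum_range_one]
        norm_num
        ring
    | succ k ih =>
      refine ⟨ih.2, ?_⟩
      rw [show k+1+1 = k+2 from rfl, Srec]
      have hrec : (x+t)^(2*(k+2)+1) + (x-t)^(2*(k+2)+1)
          = ((x+t)^2+(x-t)^2) * ((x+t)^(2*(k+1)+1)+(x-t)^(2*(k+1)+1))
            - ((x+t)*(x-t))^2 * ((x+t)^(2*k+1)+(x-t)^(2*k+1)) := by
        ring
      rw [hrec, ih.1, ih.2]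
      ring
  exact (main n).1

theorem stmt_4 (ℓ : ℝ) (hℓ : 0 < ℓ) (y : ℝ) (hy : ℓ/2 < y) (n : ℕ) :
    catenoidH ℓ n y =
      ∑ i ∈ range (n+1),
        (4:ℝ)^i * (Nat.factorial (n+i)) / ((Nat.factorial (n-i)) * Nat.factorial (2*i))
          * ℓ^(2*i) * y / (4*y^2 - ℓ^2)^i := by
  have hp : (0:ℝ) < 4*y^2 - ℓ^2 := by nlinarith
  have hk := keyA (2*y) ℓ n
  rw [show (2*y)^2 - ℓ^2 = 4*y^2 - ℓ^2 by ring] at hk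
  rw [catenoidH, hk, catS, Finset.mul_sum, Finset.sum_div]
  apply Finset.sum_congr rfl
  intro i hi
  simp only [Finset.mem_range] at hi
  have hin : i ≤ n := by omega
  rw [Nat.cast_choose ℝ (show 2*i ≤ n+i by omega), show n+i-2*i = n-i by omega]
  rw [pow_sub₀ _ (ne_of_gt hp) hin]
  have hf1 : (Nat.factorial (n-i) : ℝ) ≠ 0 := by positivity
  have hf2 : (Nat.factorial (2*i) : ℝ) ≠ 0 := by positivity
  have hpn : (4*y^2 - ℓ^2)^n ≠ 0 := pow_ne_zero _ (ne_of_gt hp)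
  have hpi : (4*y^2 - ℓ^2)^i ≠ 0 := pow_ne_zero _ (ne_of_gt hp)
  field_simp
  have hq : y^2*4 - ℓ^2 ≠ 0 := by nlinarith
  rw [div_eq_div_iff (mul_ne_zero (pow_ne_zero _ hq) (pow_ne_zero _ hq)) (pow_ne_zero _ hq)]
  ring
end

section
/- For every ℓ > 0 and every integer n ≥ 1, the function h_{n,ℓ} is positive and strictly convex on the open interval (ℓ/2, ∞). -/
open Set

private lemma deriv_lin (u : ℝ) (y : ℝ) : HasDerivAt (fun y : ℝ => 2*y + u) 2 y := by
  simpa using ((hasDerivAt_id y).const_mul 2).add_const u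

private lemma aux_deriv1 (c u v : ℝ) (m : ℕ) (y : ℝ) (hb : (2*y + v) ≠ 0) :
    HasDerivAt (fun y => c * ((2*y+u)^(m+2) / (2*y+v)^(m+1)))
      (c * ((2*(m+2)*(2*y+u)^(m+1)*(2*y+v) - 2*(m+1)*(2*y+u)^(m+2)) / (2*y+v)^(m+2))) y := by
  have hp : HasDerivAt (fun y : ℝ => (2*y+u)^(m+2))
      (((m:ℝ)+2)*(2*y+u)^(m+1)*2) y := by
    have := (deriv_lin u y).pow (m+2)
    norm_num at this ⊢
    exact this
  have hq : HasDerivAt (fun y : ℝ => (2*y+v)^(m+1))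
      (((m:ℝ)+1)*(2*y+v)^m*2) y := by
    have := (deriv_lin v y).pow (m+1)
    norm_num at this ⊢
    exact this
  have hqz : (2*y+v)^(m+1) ≠ 0 := pow_ne_zero _ hb
  have hdiv := hp.fun_div hq hqz
  have := hdiv.const_mul c
  refine this.congr_deriv ?_
  field_simp
  ring

private lemma aux_deriv2 (c u v : ℝ) (m : ℕ) (y : ℝ) (hb : (2*y + v) ≠ 0) :
    HasDerivAt (fun y => c * ((2*(m+2)*(2*y+u)^(m+1)*(2*y+v) - 2*(m+1)*(2*y+u)^(m+2)) / (2*y+v)^(m+2)))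
      (c * (4*(m+1)*(m+2)*(u-v)^2 * (2*y+u)^m / (2*y+v)^(m+3))) y := by
  have hu1 : HasDerivAt (fun y : ℝ => (2*y+u)^(m+1))
      (((m:ℝ)+1)*(2*y+u)^m*2) y := by
    have := (deriv_lin u y).pow (m+1)
    norm_num at this ⊢
    exact this
  have hu2 : HasDerivAt (fun y : ℝ => (2*y+u)^(m+2))
      (((m:ℝ)+2)*(2*y+u)^(m+1)*2) y := by
    have := (deriv_lin u y).pow (m+2)
    norm_num at this ⊢
    exact this
  have hv2 : HasDerivAt (fun y : ℝ => (2*y+v)^(m+2))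
      (((m:ℝ)+2)*(2*y+v)^(m+1)*2) y := by
    have := (deriv_lin v y).pow (m+2)
    norm_num at this ⊢
    exact this
  have hP : HasDerivAt
      (fun y : ℝ => 2*(m+2)*(2*y+u)^(m+1)*(2*y+v) - 2*(m+1)*(2*y+u)^(m+2))
      ((2*(m+2)*(((m:ℝ)+1)*(2*y+u)^m*2))*(2*y+v) + (2*(m+2)*(2*y+u)^(m+1))*2
        - 2*(m+1)*(((m:ℝ)+2)*(2*y+u)^(m+1)*2)) y := by
    exact ((((hu1.const_mul (2*((m:ℝ)+2))).mul (deriv_lin v y))).sub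
      (hu2.const_mul (2*((m:ℝ)+1))))
  have hqz : (2*y+v)^(m+2) ≠ 0 := pow_ne_zero _ hb
  have hdiv := hP.fun_div hv2 hqz
  have := hdiv.const_mul c
  refine this.congr_deriv ?_
  field_simp
  ring

private lemma aux_strictConvexOn (c u v t : ℝ) (hc : 0 < c) (huv : u ≠ v)
    (hu : 0 ≤ 2*t + u) (hv : 0 ≤ 2*t + v) (m : ℕ) :
    StrictConvexOn ℝ (Ioi t) (fun y => c * ((2*y+u)^(m+2) / (2*y+v)^(m+1))) := by
  have ha : ∀ y ∈ Ioi t, 0 < 2*y + u := fun y hy => by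
    have : t < y := hy; linarith
  have hb : ∀ y ∈ Ioi t, 0 < 2*y + v := fun y hy => by
    have : t < y := hy; linarith
  apply strictConvexOn_of_deriv2_pos (convex_Ioi t)
  · apply ContinuousOn.mul continuousOn_const
    apply ContinuousOn.div
    · fun_prop
    · fun_prop
    · exact fun y hy => pow_ne_zero _ (hb y hy).ne'
  · intro y hy
    rw [interior_Ioi] at hy
    have hby := (hb y hy).ne'
    have heq : deriv (fun y => c * ((2*y+u)^(m+2) / (2*y+v)^(m+1)))
        =ᶠ[nhds y] (fun y => c * ((2*(m+2)*(2*y+u)^(m+1)*(2*y+v)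
          - 2*(m+1)*(2*y+u)^(m+2)) / (2*y+v)^(m+2))) := by
      filter_upwards [isOpen_Ioi.mem_nhds hy] with z hz
      exact (aux_deriv1 c u v m z (hb z hz).ne').deriv
    have : deriv^[2] (fun y => c * ((2*y+u)^(m+2) / (2*y+v)^(m+1))) y
        = deriv (fun y => c * ((2*(m+2)*(2*y+u)^(m+1)*(2*y+v)
          - 2*(m+1)*(2*y+u)^(m+2)) / (2*y+v)^(m+2))) y := by
      show deriv (deriv _) y = _
      exact heq.deriv_eq
    rw [this, (aux_deriv2 c u v m y hby).deriv]
    have h1 : (0:ℝ) < 4*(m+1)*(m+2) := by positivity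
    have h2 : (0:ℝ) < (u-v)^2 := by
      have : u - v ≠ 0 := sub_ne_zero.mpr huv
      positivity
    have h3 : (0:ℝ) < (2*y+u)^m := pow_pos (ha y hy) m
    have h4 : (0:ℝ) < (2*y+v)^(m+3) := pow_pos (hb y hy) _
    positivity

theorem stmt_5 (ℓ : ℝ) (hℓ : 0 < ℓ) (n : ℕ) (hn : 1 ≤ n) :
    (∀ y ∈ Set.Ioi (ℓ/2), 0 < catenoidH ℓ n y) ∧
    StrictConvexOn ℝ (Set.Ioi (ℓ/2)) (catenoidH ℓ n) := by
  have hab : ∀ y ∈ Set.Ioi (ℓ/2), 0 < 2*y - ℓ ∧ 0 < 2*y + ℓ := by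
    intro y hy
    have : ℓ/2 < y := hy
    constructor <;> linarith
  constructor
  · intro y hy
    obtain ⟨hb, ha⟩ := hab y hy
    have hden : 0 < 4*y^2 - ℓ^2 := by nlinarith
    have hnum : 0 < (2*y + ℓ)^(2*n+1) + (2*y - ℓ)^(2*n+1) :=
      add_pos (pow_pos ha _) (pow_pos hb _)
    exact div_pos hnum (by positivity)
  · obtain ⟨m, rfl⟩ : ∃ m, n = m + 1 := ⟨n - 1, (Nat.succ_pred_eq_of_pos hn).symm⟩
    have hf := aux_strictConvexOn (1/4) ℓ (-ℓ) (ℓ/2) (by norm_num) (by linarith)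
      (by linarith) (by linarith) m
    have hg := aux_strictConvexOn (1/4) (-ℓ) ℓ (ℓ/2) (by norm_num) (by linarith)
      (by linarith) (by linarith) m
    have hsum := hf.add hg
    apply hsum.congr
    intro y hy
    obtain ⟨hb, ha⟩ := hab y hy
    have ha' : 2*y + ℓ ≠ 0 := ha.ne'
    have hb' : 2*y - ℓ ≠ 0 := hb.ne'
    have hden : (4*y^2 - ℓ^2) = (2*y + ℓ) * (2*y - ℓ) := by ring
    simp only [Pi.add_apply, catenoidH, hden, mul_pow]
    have hb2 : (2*y + -ℓ) = 2*y - ℓ := by ring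
    rw [hb2]
    field_simp
    ring
end

section
/- For every ℓ > 0 and every integer n ≥ 1, there exists a unique point μ_{n,ℓ} ∈ (ℓ/2, ∞) at which the derivative of h_{n,ℓ} vanishes, and h_{n,ℓ} attains its minimum over (ℓ/2, ∞) at μ_{n,ℓ}; i.e., h_{n,ℓ}(y) ≥ h_{n,ℓ}(μ_{n,ℓ}) for all y > ℓ/2, with equality only at y = μ_{n,ℓ}. -/
noncomputable def fP (m : ℕ) (t : ℝ) : ℝ :=
  ((m:ℝ)+2)*(t^(2*m+3)+t) - ((m:ℝ)+1)*(t^(2*m+4)+1)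

noncomputable def gP (m : ℕ) (t : ℝ) : ℝ :=
  (2*(m:ℝ)+3)*t^(2*m+2) + 1 - (2*(m:ℝ)+2)*t^(2*m+3)

noncomputable def GQ (ℓ : ℝ) (m : ℕ) (y : ℝ) : ℝ :=
  ((m:ℝ)+2)*((2*y+ℓ)^(2*m+3)*(2*y-ℓ) + (2*y+ℓ)*(2*y-ℓ)^(2*m+3))
    - ((m:ℝ)+1)*((2*y+ℓ)^(2*m+4)+(2*y-ℓ)^(2*m+4))

lemma gP_hasDerivAt (m : ℕ) (t : ℝ) :
    HasDerivAt (gP m) ((2*(m:ℝ)+2)*(2*(m:ℝ)+3)*t^(2*m+1)*(1-t)) t := by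
  have h1 : HasDerivAt (fun t : ℝ => t) 1 t := hasDerivAt_id t
  have h2 := (h1.pow (2*m+2)).const_mul (2*(m:ℝ)+3)
  have h3 := (h1.pow (2*m+3)).const_mul (2*(m:ℝ)+2)
  have := ((h2.add_const 1).sub h3)
  convert this using 1 <;> try rfl
  have e1 : 2*m+2-1 = 2*m+1 := by omega
  have e2 : 2*m+3-1 = 2*m+2 := by omega
  rw [e1, e2]
  push_cast
  ring

lemma gP_one (m : ℕ) : gP m 1 = 2 := by simp [gP]; ring

lemma gP_three (m : ℕ) : gP m 3 < 0 := by
  have h9 : (9:ℝ) ≤ 3^(2*m+2) := by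
    calc (9:ℝ) = 3^2 := by norm_num
    _ ≤ 3^(2*m+2) := pow_le_pow_right₀ (by norm_num) (by omega)
  have hm : (0:ℝ) ≤ (m:ℝ) := Nat.cast_nonneg m
  have h3 : (3:ℝ)^(2*m+3) = 3^(2*m+2)*3 := by ring
  unfold gP
  rw [h3]
  nlinarith [h9, hm]

lemma gP_strictAnti (m : ℕ) : StrictAntiOn (gP m) (Set.Ici 1) := by
  apply strictAntiOn_of_deriv_neg (convex_Ici 1)
  · exact fun t _ => ((gP_hasDerivAt m t).differentiableAt).continuousAt.continuousWithinAt
  · intro t ht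
    rw [interior_Ici] at ht
    rw [(gP_hasDerivAt m t).deriv]
    have h1 : (1:ℝ) < t := ht
    have hp : (0:ℝ) < (2*(m:ℝ)+2)*(2*(m:ℝ)+3)*t^(2*m+1) := by positivity
    exact mul_neg_of_pos_of_neg hp (by linarith)

lemma fP_hasDerivAt (m : ℕ) (t : ℝ) :
    HasDerivAt (fP m) (((m:ℝ)+2) * gP m t) t := by
  have h1 : HasDerivAt (fun t : ℝ => t) 1 t := hasDerivAt_id t
  have h2 := (((h1.pow (2*m+3)).add h1).const_mul ((m:ℝ)+2))
  have h3 := (((h1.pow (2*m+4)).add_const 1).const_mul ((m:ℝ)+1))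
  have := h2.sub h3
  convert this using 1 <;> try rfl
  have e1 : 2*m+3-1 = 2*m+2 := by omega
  have e2 : 2*m+4-1 = 2*m+3 := by omega
  rw [e1, e2]
  unfold gP
  push_cast
  ring

lemma fP_one (m : ℕ) : fP m 1 = 2 := by simp [fP]; ring

lemma fP_big (m : ℕ) (t : ℝ) (ht : 2*(m:ℝ)+6 ≤ t) : fP m t < 0 := by
  have hm : (0:ℝ) ≤ (m:ℝ) := Nat.cast_nonneg m
  have h6 : (6:ℝ) ≤ t := by linarith
  have h1t : (1:ℝ) ≤ t := by linarith
  have hX : t ≤ t^(2*m+3) := le_self_pow₀ h1t (by omega)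
  have h1X : (1:ℝ) ≤ t^(2*m+3) := le_trans h1t hX
  have h4 : t^(2*m+4) = t^(2*m+3)*t := by ring
  unfold fP
  rw [h4]
  have hX0 : (0:ℝ) ≤ t^(2*m+3) := by positivity
  have hA : t^(2*m+3) * (2*(m:ℝ)+6) ≤ t^(2*m+3) * t := mul_le_mul_of_nonneg_left ht hX0
  have hB : ((m:ℝ)+1) * (t^(2*m+3) * (2*(m:ℝ)+6)) ≤ ((m:ℝ)+1) * (t^(2*m+3) * t) :=
    mul_le_mul_of_nonneg_left hA (by linarith)
  have hC : ((m:ℝ)+2) * t ≤ ((m:ℝ)+2) * t^(2*m+3) := mul_le_mul_of_nonneg_left hX (by linarith)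
  have hD : (2*(m:ℝ)^2+6*(m:ℝ)+2) * 1 ≤ (2*(m:ℝ)^2+6*(m:ℝ)+2) * t^(2*m+3) :=
    mul_le_mul_of_nonneg_left h1X (by nlinarith)
  nlinarith [hB, hC, hD, hm]

lemma exists_t0 (m : ℕ) : ∃ t₀ : ℝ, 1 < t₀ ∧ fP m t₀ = 0 ∧
    (∀ t, 1 < t → t < t₀ → 0 < fP m t) ∧ (∀ t, t₀ < t → fP m t < 0) := by
  have contf : Continuous (fP m) := by
    have : Differentiable ℝ (fP m) := fun t => (fP_hasDerivAt m t).differentiableAt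
    exact this.continuous
  have contg : Continuous (gP m) := by
    have : Differentiable ℝ (gP m) := fun t => (gP_hasDerivAt m t).differentiableAt
    exact this.continuous
  obtain ⟨s₀, hsmem, hgs₀⟩ : ∃ s ∈ Set.Icc (1:ℝ) 3, gP m s = 0 := by
    have := intermediate_value_Icc' (by norm_num : (1:ℝ) ≤ 3) contg.continuousOn
      (Set.mem_Icc.mpr ⟨(gP_three m).le, by rw [gP_one]; norm_num⟩)
    exact this
  have hs1 : 1 < s₀ := by
    rcases lt_or_eq_of_le hsmem.1 with h | h
    · exact h
    · exfalso; rw [← h, gP_one] at hgs₀; norm_num at hgs₀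
  have gpos : ∀ t, 1 ≤ t → t < s₀ → 0 < gP m t := by
    intro t ht hts
    have := gP_strictAnti m ht (le_trans ht hts.le) hts
    rw [hgs₀] at this; exact this
  have gneg : ∀ t, s₀ < t → gP m t < 0 := by
    intro t hst
    have := gP_strictAnti m (hsmem.1) (le_trans hsmem.1 hst.le) hst
    rw [hgs₀] at this; exact this
  have fmono : StrictMonoOn (fP m) (Set.Icc 1 s₀) := by
    apply strictMonoOn_of_deriv_pos (convex_Icc 1 s₀) contf.continuousOn
    intro t ht
    rw [interior_Icc] at ht
    rw [(fP_hasDerivAt m t).deriv]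
    exact mul_pos (by positivity) (gpos t ht.1.le ht.2)
  have fanti : StrictAntiOn (fP m) (Set.Ici s₀) := by
    apply strictAntiOn_of_deriv_neg (convex_Ici s₀) contf.continuousOn
    intro t ht
    rw [interior_Ici] at ht
    rw [(fP_hasDerivAt m t).deriv]
    exact mul_neg_of_pos_of_neg (by positivity) (gneg t ht)
  have hfs₀ : 0 < fP m s₀ := by
    have := fmono (Set.mem_Icc.mpr ⟨le_refl 1, hs1.le⟩)
      (Set.mem_Icc.mpr ⟨hs1.le, le_refl s₀⟩) hs1
    rw [fP_one] at this; linarith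
  have hsT : s₀ < 2*(m:ℝ)+6 := by
    have hm : (0:ℝ) ≤ (m:ℝ) := Nat.cast_nonneg m
    have := hsmem.2; linarith
  obtain ⟨t₀, htmem, hft₀⟩ : ∃ t ∈ Set.Icc s₀ (2*(m:ℝ)+6), fP m t = 0 := by
    have := intermediate_value_Icc' hsT.le contf.continuousOn
      (Set.mem_Icc.mpr ⟨(fP_big m _ le_rfl).le, hfs₀.le⟩)
    exact this
  have hst₀ : s₀ < t₀ := by
    rcases lt_or_eq_of_le htmem.1 with h | h
    · exact h
    · exfalso; rw [← h] at hft₀; linarith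
  refine ⟨t₀, lt_trans hs1 hst₀, hft₀, ?_, ?_⟩
  · intro t ht1 htt₀
    rcases le_or_gt t s₀ with h | h
    · have := fmono (Set.mem_Icc.mpr ⟨le_refl 1, hs1.le⟩) (Set.mem_Icc.mpr ⟨ht1.le, h⟩) ht1
      rw [fP_one] at this; linarith
    · have := fanti (Set.mem_Ici.mpr h.le) (Set.mem_Ici.mpr (le_trans h.le htt₀.le)) htt₀
      rw [hft₀] at this; exact this
  · intro t htt₀
    have := fanti (Set.mem_Ici.mpr hst₀.le)
      (Set.mem_Ici.mpr (le_trans hst₀.le htt₀.le)) htt₀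
    rw [hft₀] at this; exact this

lemma hasDerivAt_catenoidH (ℓ : ℝ) (m : ℕ) (y : ℝ) (hb : 0 < 2*y - ℓ) (ha : 0 < 2*y + ℓ) :
    HasDerivAt (catenoidH ℓ (m+1)) (GQ ℓ m y / (2*(4*y^2-ℓ^2)^(m+2))) y := by
  have hC : (0:ℝ) < 4*y^2 - ℓ^2 := by nlinarith
  have hid : HasDerivAt (fun y : ℝ => y) 1 y := hasDerivAt_id y
  have hA : HasDerivAt (fun y : ℝ => 2*y + ℓ) 2 y := by
    simpa using (hid.const_mul 2).add_const ℓ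
  have hB : HasDerivAt (fun y : ℝ => 2*y - ℓ) 2 y := by
    simpa using (hid.const_mul 2).sub_const ℓ
  have hu : HasDerivAt (fun y : ℝ => (2*y+ℓ)^(2*m+3) + (2*y-ℓ)^(2*m+3))
      ((2*(m:ℝ)+3)*(2*y+ℓ)^(2*m+2)*2 + (2*(m:ℝ)+3)*(2*y-ℓ)^(2*m+2)*2) y := by
    have := (hA.pow (2*m+3)).add (hB.pow (2*m+3))
    convert this using 1 <;> try rfl
    have e1 : 2*m+3-1 = 2*m+2 := by omega
    rw [e1]; push_cast; ring
  have hc : HasDerivAt (fun y : ℝ => 4*y^2 - ℓ^2) (2*(2*y+ℓ) + 2*(2*y-ℓ)) y := by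
    have := ((hasDerivAt_pow 2 y).const_mul 4).sub_const (ℓ^2)
    convert this using 1 <;> try rfl
    push_cast; ring
  have hv : HasDerivAt (fun y : ℝ => 4 * (4*y^2 - ℓ^2)^(m+1))
      (4*(((m:ℝ)+1)*(4*y^2-ℓ^2)^m*(2*(2*y+ℓ) + 2*(2*y-ℓ)))) y := by
    have := (hc.pow (m+1)).const_mul 4
    convert this using 1 <;> try rfl
    have e1 : m+1-1 = m := by omega
    rw [e1]; push_cast; ring
  have hfun : catenoidH ℓ (m+1) = fun y : ℝ =>
      ((2*y+ℓ)^(2*m+3) + (2*y-ℓ)^(2*m+3)) / (4 * (4*y^2 - ℓ^2)^(m+1)) := by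
    funext z
    have e1 : 2*(m+1)+1 = 2*m+3 := by omega
    rw [catenoidH, e1]
  rw [hfun]
  have hvne : 4 * (4*y^2 - ℓ^2)^(m+1) ≠ 0 := by positivity
  have := hu.div hv hvne
  convert this using 1 <;> try rfl
  rw [div_eq_div_iff (by positivity) (by positivity)]
  rw [GQ, show (4*y^2 - ℓ^2) = (2*y+ℓ)*(2*y-ℓ) from by ring]
  simp only [mul_pow]
  ring

lemma GQ_eq (ℓ : ℝ) (m : ℕ) (y : ℝ) (hb : 0 < 2*y - ℓ) :
    GQ ℓ m y = (2*y-ℓ)^(2*m+4) * fP m ((2*y+ℓ)/(2*y-ℓ)) := by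
  have hb' : (2*y - ℓ) ≠ 0 := ne_of_gt hb
  rw [GQ, fP, div_pow, div_pow]
  field_simp
  ring

theorem stmt_7 (ℓ : ℝ) (hℓ : 0 < ℓ) (n : ℕ) (hn : 1 ≤ n) :
    ∃ μ : ℝ, ℓ/2 < μ ∧ deriv (catenoidH ℓ n) μ = 0 ∧
      (∀ y : ℝ, ℓ/2 < y → deriv (catenoidH ℓ n) y = 0 → y = μ) ∧
      (∀ y : ℝ, ℓ/2 < y → catenoidH ℓ n μ ≤ catenoidH ℓ n y) ∧
      (∀ y : ℝ, ℓ/2 < y → catenoidH ℓ n y = catenoidH ℓ n μ → y = μ) := by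
  obtain ⟨m, rfl⟩ : ∃ m, n = m + 1 := ⟨n - 1, by omega⟩
  obtain ⟨t₀, ht₀1, hft₀, hfpos, hfneg⟩ := exists_t0 m
  have ht₀ne : t₀ - 1 ≠ 0 := by linarith
  set μ := ℓ*(t₀+1)/(2*(t₀-1)) with hμdef
  have hμ : ℓ/2 < μ := by
    have h1 : μ - ℓ/2 = ℓ/(t₀-1) := by rw [hμdef]; field_simp; ring
    have h2 : 0 < ℓ/(t₀-1) := div_pos hℓ (by linarith)
    linarith
  -- basic positivity
  have hb : ∀ y : ℝ, ℓ/2 < y → 0 < 2*y - ℓ := fun y hy => by linarith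
  have ha : ∀ y : ℝ, ℓ/2 < y → 0 < 2*y + ℓ := fun y hy => by linarith
  have hCpos : ∀ y : ℝ, ℓ/2 < y → 0 < 4*y^2 - ℓ^2 := by
    intro y hy; nlinarith [hb y hy, ha y hy]
  -- the map t
  have htgt1 : ∀ y : ℝ, ℓ/2 < y → 1 < (2*y+ℓ)/(2*y-ℓ) := by
    intro y hy
    rw [lt_div_iff₀ (hb y hy)]
    linarith
  have tanti : ∀ y z : ℝ, ℓ/2 < y → y < z → (2*z+ℓ)/(2*z-ℓ) < (2*y+ℓ)/(2*y-ℓ) := by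
    intro y z hy hyz
    rw [div_lt_div_iff₀ (hb z (by linarith)) (hb y hy)]
    nlinarith [mul_pos hℓ (sub_pos.mpr hyz)]
  have htmapμ : (2*μ+ℓ)/(2*μ-ℓ) = t₀ := by
    rw [div_eq_iff (ne_of_gt (hb μ hμ)), hμdef]
    field_simp
    ring
  -- sign of GQ
  have hGQzero : GQ ℓ m μ = 0 := by
    rw [GQ_eq ℓ m μ (hb μ hμ), htmapμ, hft₀, mul_zero]
  have hGQneg : ∀ y : ℝ, ℓ/2 < y → y < μ → GQ ℓ m y < 0 := by
    intro y hy hyμ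
    have h1 : t₀ < (2*y+ℓ)/(2*y-ℓ) := by
      have := tanti y μ hy hyμ
      rwa [htmapμ] at this
    rw [GQ_eq ℓ m y (hb y hy)]
    exact mul_neg_of_pos_of_neg (pow_pos (hb y hy) _) (hfneg _ h1)
  have hGQpos : ∀ y : ℝ, ℓ/2 < y → μ < y → 0 < GQ ℓ m y := by
    intro y hy hμy
    have h1 : (2*y+ℓ)/(2*y-ℓ) < t₀ := by
      have := tanti μ y hμ hμy
      rwa [htmapμ] at this
    rw [GQ_eq ℓ m y (hb y hy)]
    exact mul_pos (pow_pos (hb y hy) _) (hfpos _ (htgt1 y hy) h1)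
  -- derivative formula
  have hder : ∀ y : ℝ, ℓ/2 < y →
      deriv (catenoidH ℓ (m+1)) y = GQ ℓ m y / (2*(4*y^2-ℓ^2)^(m+2)) :=
    fun y hy => (hasDerivAt_catenoidH ℓ m y (hb y hy) (ha y hy)).deriv
  have hdenpos : ∀ y : ℝ, ℓ/2 < y → 0 < 2*(4*y^2-ℓ^2)^(m+2) := by
    intro y hy
    have := hCpos y hy
    positivity
  -- continuity
  have hcont : ∀ y : ℝ, ℓ/2 < y → ContinuousAt (catenoidH ℓ (m+1)) y :=
    fun y hy => (hasDerivAt_catenoidH ℓ m y (hb y hy) (ha y hy)).differentiableAt.continuousAt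
  -- monotonicity pieces
  have hanti : StrictAntiOn (catenoidH ℓ (m+1)) (Set.Ioc (ℓ/2) μ) := by
    apply strictAntiOn_of_deriv_neg (convex_Ioc _ _)
    · exact fun y hy => (hcont y hy.1).continuousWithinAt
    · intro y hy
      rw [interior_Ioc] at hy
      rw [hder y hy.1]
      exact div_neg_of_neg_of_pos (hGQneg y hy.1 hy.2) (hdenpos y hy.1)
  have hmono : StrictMonoOn (catenoidH ℓ (m+1)) (Set.Ici μ) := by
    apply strictMonoOn_of_deriv_pos (convex_Ici _)
    · exact fun y hy => (hcont y (lt_of_lt_of_le hμ hy)).continuousWithinAt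
    · intro y hy
      rw [interior_Ici] at hy
      have hy' : ℓ/2 < y := lt_trans hμ hy
      rw [hder y hy']
      exact div_pos (hGQpos y hy' hy) (hdenpos y hy')
  have hmin : ∀ y : ℝ, ℓ/2 < y → y ≠ μ → catenoidH ℓ (m+1) μ < catenoidH ℓ (m+1) y := by
    intro y hy hne
    rcases lt_or_gt_of_ne hne with h | h
    · exact hanti (Set.mem_Ioc.mpr ⟨hy, h.le⟩) (Set.mem_Ioc.mpr ⟨hμ, le_refl μ⟩) h
    · exact hmono (Set.mem_Ici.mpr (le_refl μ)) (Set.mem_Ici.mpr h.le) h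
  refine ⟨μ, hμ, ?_, ?_, ?_, ?_⟩
  · rw [hder μ hμ, hGQzero, zero_div]
  · intro y hy hdy
    rw [hder y hy] at hdy
    have hGQy : GQ ℓ m y = 0 := by
      have := hdenpos y hy
      field_simp at hdy
      rw [mul_zero, div_eq_zero_iff] at hdy
      exact hdy.resolve_right (pow_pos (hCpos y hy) _).ne'
    by_contra hne
    rcases lt_or_gt_of_ne hne with h | h
    · exact absurd hGQy (ne_of_lt (hGQneg y hy h))
    · exact absurd hGQy (ne_of_gt (hGQpos y hy h))
  · intro y hy
    rcases eq_or_ne y μ with h | h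
    · rw [h]
    · exact (hmin y hy h).le
  · intro y hy heq
    by_contra hne
    exact absurd heq (ne_of_gt (hmin y hy hne))
end

section
/- (Theorem 2.4(1)) Let ℓ > 0 and m ≥ 1, and let ν_{m,ℓ} denote the minimum value of h_{m,ℓ} over (ℓ/2, ∞). If a > ν_{m,ℓ}, then the equation h_{m,ℓ}(y) = a has exactly two solutions y_{a,m,ℓ}^− < y_{a,m,ℓ}^+ in the interval (ℓ/2, ∞). -/
noncomputable def catH1 (ℓ : ℝ) (m : ℕ) (y : ℝ) : ℝ :=
  (4*y*((2*y + ℓ)^(2*m+1) + (2*y - ℓ)^(2*m+1))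
    - 2*ℓ*(2*m+1)*((2*y + ℓ)^(2*m+1) - (2*y - ℓ)^(2*m+1))) / (4 * (4*y^2 - ℓ^2)^(m+1))

lemma hasDerivAt_catenoidH_s8 (ℓ : ℝ) (hℓ : 0 < ℓ) (m : ℕ) (hm : 1 ≤ m) {y : ℝ}
    (hy : ℓ/2 < y) : HasDerivAt (catenoidH ℓ m) (catH1 ℓ m y) y := by
  have hB : 0 < 2*y - ℓ := by linarith
  have hA : 0 < 2*y + ℓ := by linarith
  have hC : 0 < 4*y^2 - ℓ^2 := by nlinarith
  obtain ⟨m', rfl⟩ : ∃ m', m = m' + 1 := ⟨m - 1, (Nat.succ_pred_eq_of_pos hm).symm⟩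
  have hAy : HasDerivAt (fun y : ℝ => 2*y + ℓ) 2 y := by
    simpa using ((hasDerivAt_id y).const_mul 2).add_const ℓ
  have hBy : HasDerivAt (fun y : ℝ => 2*y - ℓ) 2 y := by
    simpa using ((hasDerivAt_id y).const_mul 2).sub_const ℓ
  have hCy : HasDerivAt (fun y : ℝ => 4*y^2 - ℓ^2) (8*y) y := by
    have := ((hasDerivAt_pow 2 y).const_mul 4).sub_const (ℓ^2); convert this using 1 <;> first | rfl | ring
  have hN : HasDerivAt (fun y : ℝ => (2*y + ℓ)^(2*(m'+1)+1) + (2*y - ℓ)^(2*(m'+1)+1))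
      ((2*(m'+1)+1) * (2*y+ℓ)^(2*(m'+1)) * 2 + (2*(m'+1)+1) * (2*y-ℓ)^(2*(m'+1)) * 2) y := by
    have := (hAy.pow (2*(m'+1)+1)).add (hBy.pow (2*(m'+1)+1))
    norm_num at this ⊢
    convert this using 2 <;> first | rfl | ring
  have hD : HasDerivAt (fun y : ℝ => 4 * (4*y^2 - ℓ^2)^(m'+1))
      (4 * ((m'+1) * (4*y^2-ℓ^2)^m' * (8*y))) y := by
    have := (hCy.pow (m'+1)).const_mul 4
    norm_num at this ⊢
    convert this using 2 <;> first | rfl | ring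
  have hD0 : (4 : ℝ) * (4*y^2 - ℓ^2)^(m'+1) ≠ 0 := by positivity
  have := hN.div hD hD0
  convert this using 1 <;> try rfl
  unfold catH1
  rw [show (4*y^2 - ℓ^2) = (2*y+ℓ)*(2*y-ℓ) by ring]
  rw [div_eq_div_iff (by positivity) (by positivity)]
  push_cast
  ring

noncomputable def catH2 (ℓ : ℝ) (m : ℕ) (y : ℝ) : ℝ :=
  4*m*(m+1)*ℓ^2*((2*y + ℓ)^(2*m+1) + (2*y - ℓ)^(2*m+1)) / (4*y^2 - ℓ^2)^(m+2)

lemma hasDerivAt_catH1 (ℓ : ℝ) (hℓ : 0 < ℓ) (m : ℕ) (hm : 1 ≤ m) {y : ℝ}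
    (hy : ℓ/2 < y) : HasDerivAt (catH1 ℓ m) (catH2 ℓ m y) y := by
  have hB : 0 < 2*y - ℓ := by linarith
  have hA : 0 < 2*y + ℓ := by linarith
  have hC : 0 < 4*y^2 - ℓ^2 := by nlinarith
  have hAy : HasDerivAt (fun y : ℝ => 2*y + ℓ) 2 y := by
    simpa using ((hasDerivAt_id y).const_mul 2).add_const ℓ
  have hBy : HasDerivAt (fun y : ℝ => 2*y - ℓ) 2 y := by
    simpa using ((hasDerivAt_id y).const_mul 2).sub_const ℓ
  have hCy : HasDerivAt (fun y : ℝ => 4*y^2 - ℓ^2) (8*y) y := by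
    have := ((hasDerivAt_pow 2 y).const_mul 4).sub_const (ℓ^2); convert this using 1 <;> first | rfl | ring
  have hN : HasDerivAt (fun y : ℝ => (2*y + ℓ)^(2*m+1) + (2*y - ℓ)^(2*m+1))
      ((2*m+1) * (2*y+ℓ)^(2*m) * 2 + (2*m+1) * (2*y-ℓ)^(2*m) * 2) y := by
    have := (hAy.pow (2*m+1)).add (hBy.pow (2*m+1))
    norm_num at this ⊢
    convert this using 2 <;> first | rfl | ring
  have hM : HasDerivAt (fun y : ℝ => (2*y + ℓ)^(2*m+1) - (2*y - ℓ)^(2*m+1))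
      ((2*m+1) * (2*y+ℓ)^(2*m) * 2 - (2*m+1) * (2*y-ℓ)^(2*m) * 2) y := by
    have := (hAy.pow (2*m+1)).sub (hBy.pow (2*m+1))
    norm_num at this ⊢
    convert this using 2 <;> first | rfl | ring
  have hNum : HasDerivAt (fun y : ℝ =>
      4*y*((2*y + ℓ)^(2*m+1) + (2*y - ℓ)^(2*m+1))
        - 2*ℓ*(2*m+1)*((2*y + ℓ)^(2*m+1) - (2*y - ℓ)^(2*m+1)))
      (4*((2*y + ℓ)^(2*m+1) + (2*y - ℓ)^(2*m+1))
        + 4*y*((2*m+1) * (2*y+ℓ)^(2*m) * 2 + (2*m+1) * (2*y-ℓ)^(2*m) * 2)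
        - 2*ℓ*(2*m+1)*((2*m+1) * (2*y+ℓ)^(2*m) * 2 - (2*m+1) * (2*y-ℓ)^(2*m) * 2)) y := by
    have h4y : HasDerivAt (fun y : ℝ => 4*y) 4 y := by
      simpa using (hasDerivAt_id y).const_mul 4
    have := (h4y.mul hN).sub (hM.const_mul (2*ℓ*(2*m+1)))
    convert this using 1 <;> try rfl
    try ring
  have hD : HasDerivAt (fun y : ℝ => 4 * (4*y^2 - ℓ^2)^(m+1))
      (4 * ((m+1) * (4*y^2-ℓ^2)^m * (8*y))) y := by
    have := (hCy.pow (m+1)).const_mul 4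
    norm_num at this ⊢
    convert this using 2 <;> first | rfl | ring
  have hD0 : (4 : ℝ) * (4*y^2 - ℓ^2)^(m+1) ≠ 0 := by positivity
  have := hNum.div hD hD0
  obtain ⟨m', rfl⟩ : ∃ m', m = m' + 1 := ⟨m - 1, (Nat.succ_pred_eq_of_pos hm).symm⟩
  convert this using 1 <;> try rfl
  unfold catH2
  rw [show (4*y^2 - ℓ^2) = (2*y+ℓ)*(2*y-ℓ) by ring]
  rw [div_eq_div_iff (by positivity) (by positivity)]
  push_cast
  ring

lemma strictConvex_catenoidH (ℓ : ℝ) (hℓ : 0 < ℓ) (m : ℕ) (hm : 1 ≤ m) :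
    StrictConvexOn ℝ (Set.Ioi (ℓ/2)) (catenoidH ℓ m) := by
  apply strictConvexOn_of_deriv2_pos (convex_Ioi _)
  · intro x hx
    exact (hasDerivAt_catenoidH_s8 ℓ hℓ m hm hx).differentiableAt.continuousAt.continuousWithinAt
  · intro x hx
    rw [interior_Ioi] at hx
    have hev : deriv (catenoidH ℓ m) =ᶠ[nhds x] catH1 ℓ m := by
      filter_upwards [Ioi_mem_nhds hx] with z hz using
        (hasDerivAt_catenoidH_s8 ℓ hℓ m hm hz).deriv
    have h2 : deriv^[2] (catenoidH ℓ m) x = catH2 ℓ m x := by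
      simp only [Function.iterate_succ, Function.iterate_zero, Function.comp,
        Function.id_def]
      rw [hev.deriv_eq]
      exact (hasDerivAt_catH1 ℓ hℓ m hm hx).deriv
    rw [h2]
    have hB : 0 < 2*x - ℓ := by simp at hx; linarith
    have hA : 0 < 2*x + ℓ := by linarith
    have hC : 0 < 4*x^2 - ℓ^2 := by nlinarith
    have hm' : (0:ℝ) < m := by exact_mod_cast hm
    unfold catH2
    positivity

lemma tendsto_catenoidH_right (ℓ : ℝ) (hℓ : 0 < ℓ) (m : ℕ) (hm : 1 ≤ m) :
    Filter.Tendsto (catenoidH ℓ m) (nhdsWithin (ℓ/2) (Set.Ioi (ℓ/2))) Filter.atTop := by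
  have hnum : Filter.Tendsto (fun y : ℝ => (2*y + ℓ)^(2*m+1) + (2*y - ℓ)^(2*m+1))
      (nhdsWithin (ℓ/2) (Set.Ioi (ℓ/2))) (nhds ((2*ℓ)^(2*m+1))) := by
    have : ContinuousAt (fun y : ℝ => (2*y + ℓ)^(2*m+1) + (2*y - ℓ)^(2*m+1)) (ℓ/2) := by
      fun_prop
    have h := this.tendsto.mono_left (nhdsWithin_le_nhds (s := Set.Ioi (ℓ/2)))
    convert h using 2
    rw [show 2*(ℓ/2) + ℓ = 2*ℓ by ring, show 2*(ℓ/2) - ℓ = 0 by ring]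
    simp
  have hden : Filter.Tendsto (fun y : ℝ => 4 * (4*y^2 - ℓ^2)^m)
      (nhdsWithin (ℓ/2) (Set.Ioi (ℓ/2))) (nhdsWithin 0 (Set.Ioi 0)) := by
    rw [tendsto_nhdsWithin_iff]
    constructor
    · have hc : ContinuousAt (fun y : ℝ => 4 * (4*y^2 - ℓ^2)^m) (ℓ/2) := by fun_prop
      have h := hc.tendsto.mono_left (nhdsWithin_le_nhds (s := Set.Ioi (ℓ/2)))
      convert h using 2
      rw [show 4*(ℓ/2)^2 - ℓ^2 = 0 by ring]
      rw [zero_pow (by omega : m ≠ 0), mul_zero]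
    · filter_upwards [self_mem_nhdsWithin] with y hy
      simp only [Set.mem_Ioi] at hy ⊢
      have hB : 0 < 2*y - ℓ := by linarith
      have hA : 0 < 2*y + ℓ := by linarith
      have hC : 0 < 4*y^2 - ℓ^2 := by nlinarith
      positivity
  have hpos : (0:ℝ) < (2*ℓ)^(2*m+1) := by positivity
  have hmain := (hden.inv_tendsto_nhdsGT_zero).atTop_mul_pos hpos hnum
  refine hmain.congr fun y => ?_
  unfold catenoidH
  rw [div_eq_mul_inv, mul_comm]
  simp [Pi.inv_apply]


lemma catenoidH_lb (ℓ : ℝ) (hℓ : 0 < ℓ) (m : ℕ) {y : ℝ} (hy : ℓ/2 < y) :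
    (2*y + ℓ)/4 ≤ catenoidH ℓ m y := by
  have hB : 0 < 2*y - ℓ := by linarith
  have hA : 0 < 2*y + ℓ := by linarith
  have hC : 0 < 4*y^2 - ℓ^2 := by nlinarith
  have hD : (0:ℝ) < 4 * (4*y^2 - ℓ^2)^m := by positivity
  rw [catenoidH, le_div_iff₀ hD]
  have h1 : (4*y^2 - ℓ^2)^m ≤ ((2*y+ℓ)^2)^m :=
    pow_le_pow_left₀ hC.le (by nlinarith) m
  have h2 : ((2*y+ℓ)^2)^m * (2*y+ℓ) = (2*y+ℓ)^(2*m+1) := by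
    rw [← pow_mul, ← pow_succ]
  have h3 : (0:ℝ) < (2*y - ℓ)^(2*m+1) := pow_pos hB _
  nlinarith [mul_le_mul_of_nonneg_right h1 hA.le]

lemma strictConvexOn_no_three {f : ℝ → ℝ} {s : Set ℝ} (hf : StrictConvexOn ℝ s f)
    {x y z a : ℝ} (hx : x ∈ s) (hz : z ∈ s) (h1 : x < y) (h2 : y < z)
    (ha : f x = a) (hb : f y = a) (hc : f z = a) : False := by
  have hxz : x < z := h1.trans h2
  set t : ℝ := (z - y)/(z - x) with ht_def
  have ht0 : 0 < t := div_pos (by linarith) (by linarith)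
  have ht1 : 0 < 1 - t := by
    have : t < 1 := (div_lt_one (by linarith)).mpr (by linarith)
    linarith
  have hsum : t + (1 - t) = 1 := by ring
  have hzx : z - x ≠ 0 := by linarith
  have hyeq : t • x + (1 - t) • z = y := by
    rw [smul_eq_mul, smul_eq_mul, ht_def]
    field_simp
    ring
  have hlt := hf.2 hx hz hxz.ne ht0 ht1 hsum
  rw [hyeq, hb, ha, hc] at hlt
  have h' : t • a + (1-t) • a = a := by rw [smul_eq_mul, smul_eq_mul]; ring
  rw [h'] at hlt
  exact lt_irrefl _ hlt

theorem stmt_8 (ℓ : ℝ) (hℓ : 0 < ℓ) (m : ℕ) (hm : 1 ≤ m) (ν : ℝ)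
    (hν : IsLeast (catenoidH ℓ m '' Set.Ioi (ℓ/2)) ν)
    (a : ℝ) (ha : ν < a) :
    ∃ y₁ y₂ : ℝ, ℓ/2 < y₁ ∧ y₁ < y₂ ∧
      catenoidH ℓ m y₁ = a ∧ catenoidH ℓ m y₂ = a ∧
      ∀ y : ℝ, ℓ/2 < y → catenoidH ℓ m y = a → y = y₁ ∨ y = y₂ := by
  obtain ⟨⟨y₀, hy₀mem, hy₀⟩, hlb⟩ := hν
  rw [Set.mem_Ioi] at hy₀mem
  have hlb' : ∀ y : ℝ, ℓ/2 < y → ν ≤ catenoidH ℓ m y := fun y hy =>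
    hlb ⟨y, Set.mem_Ioi.mpr hy, rfl⟩
  have hcont : ∀ {u v : ℝ}, ℓ/2 < u → ContinuousOn (catenoidH ℓ m) (Set.Icc u v) := by
    intro u v hu
    intro x hx
    exact (hasDerivAt_catenoidH_s8 ℓ hℓ m hm
      (lt_of_lt_of_le hu hx.1)).differentiableAt.continuousAt.continuousWithinAt
  -- find yl < y₀ with catenoidH yl > a
  have hev : ∀ᶠ y in nhdsWithin (ℓ/2) (Set.Ioi (ℓ/2)),
      a < catenoidH ℓ m y ∧ y < y₀ ∧ ℓ/2 < y := by
    have h1 := (tendsto_catenoidH_right ℓ hℓ m hm).eventually_gt_atTop a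
    have h2 : ∀ᶠ y in nhdsWithin (ℓ/2) (Set.Ioi (ℓ/2)), y < y₀ :=
      eventually_nhdsWithin_of_eventually_nhds (Filter.Tendsto.eventually_lt_const hy₀mem
        Filter.tendsto_id)
    have h3 : ∀ᶠ y in nhdsWithin (ℓ/2) (Set.Ioi (ℓ/2)), ℓ/2 < y := self_mem_nhdsWithin
    filter_upwards [h1, h2, h3] with y a1 a2 a3 using ⟨a1, a2, a3⟩
  obtain ⟨yl, hyl_gt, hyl_lt, hyl_mem⟩ := hev.exists
  -- left solution
  have hsub1 := intermediate_value_Icc' hyl_lt.le (hcont hyl_mem)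
  have ha1 : a ∈ Set.Icc (catenoidH ℓ m y₀) (catenoidH ℓ m yl) := by
    rw [hy₀]; exact ⟨ha.le, hyl_gt.le⟩
  obtain ⟨y₁, hy₁mem, hy₁⟩ := hsub1 ha1
  have hy₁gt : ℓ/2 < y₁ := lt_of_lt_of_le hyl_mem hy₁mem.1
  have hy₁lt : y₁ < y₀ := lt_of_le_of_ne hy₁mem.2 (by rintro rfl; rw [hy₀] at hy₁; linarith)
  -- right point
  set yr : ℝ := max (y₀ + 1) (2*a) with hyr_def
  have hyr_gt₀ : y₀ < yr := lt_of_lt_of_le (by linarith) (le_max_left _ _)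
  have hyr_mem : ℓ/2 < yr := hy₀mem.trans hyr_gt₀
  have hyr_val : a < catenoidH ℓ m yr := by
    have := catenoidH_lb ℓ hℓ m hyr_mem
    have h2a : 2*a ≤ yr := le_max_right _ _
    linarith
  have hsub2 := intermediate_value_Icc hyr_gt₀.le (hcont hy₀mem)
  have ha2 : a ∈ Set.Icc (catenoidH ℓ m y₀) (catenoidH ℓ m yr) := by
    rw [hy₀]; exact ⟨ha.le, hyr_val.le⟩
  obtain ⟨y₂, hy₂mem, hy₂⟩ := hsub2 ha2
  have hy₂gt : y₀ < y₂ := lt_of_le_of_ne hy₂mem.1 (by rintro rfl; rw [hy₀] at hy₂; linarith)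
  have hy₂mem' : ℓ/2 < y₂ := hy₀mem.trans hy₂gt
  have hconv := strictConvex_catenoidH ℓ hℓ m hm
  refine ⟨y₁, y₂, hy₁gt, hy₁lt.trans hy₂gt, hy₁, hy₂, ?_⟩
  intro y hy hya
  rcases lt_trichotomy y y₁ with h | h | h
  · exact absurd (strictConvexOn_no_three hconv (Set.mem_Ioi.mpr hy)
      (Set.mem_Ioi.mpr hy₂mem') h (hy₁lt.trans hy₂gt) hya hy₁ hy₂) id
  · exact Or.inl h
  rcases lt_trichotomy y y₂ with h' | h' | h'
  · exact absurd (strictConvexOn_no_three hconv (Set.mem_Ioi.mpr hy₁gt)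
      (Set.mem_Ioi.mpr hy₂mem') h h' hy₁ hya hy₂) id
  · exact Or.inr h'
  · exact absurd (strictConvexOn_no_three hconv (Set.mem_Ioi.mpr hy₁gt)
      (Set.mem_Ioi.mpr hy) (hy₁lt.trans hy₂gt) h' hy₁ hy₂ hya) id
end

section
/- (Theorem 2.4(2)) Let ℓ > 0, m ≥ 1, and let y* > ℓ/2 with a := h_{m,ℓ}(y*). Then the point (y₀, y₁, …, y_{m−1}) := (h_{0,ℓ}(y*), h_{1,ℓ}(y*), …, h_{m−1,ℓ}(y*)) is a critical point of T_{a,m,ℓ}, i.e., all first-order partial derivatives ∂T_{a,m,ℓ}/∂y_i vanish at this point for 0 ≤ i ≤ m−1. Consequently the symmetric piecewise truncated conical surface D_{2m+1,ℓ}(a, y_{m−1}, …, y_0, y_0, …, y_{m−1}, a), whose area is 2π·T_{a,m,ℓ}(y₀,…,y_{m−1}), is minimal. -/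
open Finset

/-- `S ℓ s t = (s+t)·√((t−s)² + ℓ²)`, the (1/π-scaled) area of a truncated cone. -/
noncomputable def coneS (ℓ s t : ℝ) : ℝ := (s + t) * Real.sqrt ((t - s)^2 + ℓ^2)

/-- `T a ℓ m y = y₀ℓ + Σ_{i=1}^{m−1} S_ℓ(y_{i−1}, y_i) + S_ℓ(y_{m−1}, a)`
(half the area of the symmetric PTC surface, divided by π). -/
noncomputable def coneT (a ℓ : ℝ) (m : ℕ) (y : ℕ → ℝ) : ℝ :=
  y 0 * ℓ + (∑ i ∈ range (m-1), coneS ℓ (y i) (y (i+1))) + coneS ℓ (y (m-1)) a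

noncomputable def segQ (ℓ y : ℝ) (n : ℕ) : ℝ :=
  ℓ * (((2*y+ℓ)^(n+1))^2 + ((2*y-ℓ)^(n+1))^2) / (2 * ((2*y+ℓ)^(n+1) * (2*y-ℓ)^(n+1)))

noncomputable def segR (ℓ y : ℝ) (n : ℕ) : ℝ :=
  (4*y) * (((2*y+ℓ)^(n+1))^2 - ((2*y-ℓ)^(n+1))^2) / (4 * ((2*y+ℓ)^(n+1) * (2*y-ℓ)^(n+1)))

lemma catenoidH_eq (ℓ y : ℝ) (n : ℕ) :
    catenoidH ℓ n y =
      (((2*y+ℓ)^n)^2*(2*y+ℓ) + ((2*y-ℓ)^n)^2*(2*y-ℓ)) / (4 * ((2*y+ℓ)^n * ((2*y-ℓ)^n))) := by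
  unfold catenoidH
  have h1 : 4*y^2 - ℓ^2 = (2*y+ℓ)*(2*y-ℓ) := by ring
  have h2 : ∀ x : ℝ, x^(2*n+1) = (x^n)^2 * x := fun x => by
    rw [pow_succ, mul_comm 2 n, pow_mul]
  rw [h1, mul_pow, h2, h2]

lemma segQ_pos (ℓ y : ℝ) (hℓ : 0 < ℓ) (hy : ℓ/2 < y) (n : ℕ) : 0 < segQ ℓ y n := by
  have hu : (0:ℝ) < 2*y+ℓ := by linarith
  have hv : (0:ℝ) < 2*y-ℓ := by linarith
  unfold segQ
  positivity

lemma segQ_sq (ℓ y : ℝ) (hℓ : 0 < ℓ) (hy : ℓ/2 < y) (n : ℕ) :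
    segQ ℓ y n ^ 2 = (catenoidH ℓ (n+1) y - catenoidH ℓ n y)^2 + ℓ^2 := by
  have hu : (0:ℝ) < 2*y+ℓ := by linarith
  have hv : (0:ℝ) < 2*y-ℓ := by linarith
  rw [catenoidH_eq, catenoidH_eq]
  unfold segQ
  set p := (2*y+ℓ)^n with hpdef
  set q := (2*y-ℓ)^n with hqdef
  have hp : 0 < p := pow_pos hu n
  have hq : 0 < q := pow_pos hv n
  rw [show (2*y+ℓ)^(n+1) = p*(2*y+ℓ) from pow_succ _ n,
      show (2*y-ℓ)^(n+1) = q*(2*y-ℓ) from pow_succ _ n]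
  field_simp
  ring

lemma segR_eq (ℓ y : ℝ) (hℓ : 0 < ℓ) (hy : ℓ/2 < y) (n : ℕ) :
    (catenoidH ℓ n y + catenoidH ℓ (n+1) y) * (catenoidH ℓ (n+1) y - catenoidH ℓ n y)
      = segR ℓ y n * segQ ℓ y n := by
  have hu : (0:ℝ) < 2*y+ℓ := by linarith
  have hv : (0:ℝ) < 2*y-ℓ := by linarith
  rw [catenoidH_eq, catenoidH_eq]
  unfold segQ segR
  set p := (2*y+ℓ)^n with hpdef
  set q := (2*y-ℓ)^n with hqdef
  have hp : 0 < p := pow_pos hu n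
  have hq : 0 < q := pow_pos hv n
  rw [show (2*y+ℓ)^(n+1) = p*(2*y+ℓ) from pow_succ _ n,
      show (2*y-ℓ)^(n+1) = q*(2*y-ℓ) from pow_succ _ n]
  field_simp
  ring

lemma key_zero (ℓ y : ℝ) (hℓ : 0 < ℓ) (hy : ℓ/2 < y) :
    ℓ + (segQ ℓ y 0 - segR ℓ y 0) = 0 := by
  have hu : (0:ℝ) < 2*y+ℓ := by linarith
  have hv : (0:ℝ) < 2*y-ℓ := by linarith
  unfold segQ segR
  field_simp
  ring

lemma key_succ (ℓ y : ℝ) (hℓ : 0 < ℓ) (hy : ℓ/2 < y) (n : ℕ) :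
    (segQ ℓ y n + segR ℓ y n) + (segQ ℓ y (n+1) - segR ℓ y (n+1)) = 0 := by
  have hu : (0:ℝ) < 2*y+ℓ := by linarith
  have hv : (0:ℝ) < 2*y-ℓ := by linarith
  unfold segQ segR
  set p := (2*y+ℓ)^(n+1) with hpdef
  set q := (2*y-ℓ)^(n+1) with hqdef
  have hp : 0 < p := pow_pos hu _
  have hq : 0 < q := pow_pos hv _
  rw [show (2*y+ℓ)^(n+1+1) = p*(2*y+ℓ) from pow_succ _ _,
      show (2*y-ℓ)^(n+1+1) = q*(2*y-ℓ) from pow_succ _ _]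
  field_simp
  ring

lemma hasDerivAt_coneS_right (ℓ s t q : ℝ) (hq : 0 < q) (h : q^2 = (t-s)^2 + ℓ^2) :
    HasDerivAt (fun x => coneS ℓ s x) (q + (s+t)*(t-s)/q) t := by
  have hpos : 0 < (t-s)^2 + ℓ^2 := h ▸ (by positivity)
  have hsqrt : Real.sqrt ((t-s)^2 + ℓ^2) = q := by
    rw [← h, Real.sqrt_sq hq.le]
  have h1 : HasDerivAt (fun x : ℝ => (x-s)^2 + ℓ^2) (2*(t-s)) t := by
    have := (((hasDerivAt_id t).sub_const s).pow 2).add_const (ℓ^2)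
    simpa using this
  have h2 : HasDerivAt (fun x => Real.sqrt ((x-s)^2 + ℓ^2)) ((t-s)/q) t := by
    have h3 := (Real.hasDerivAt_sqrt hpos.ne').comp t h1
    convert h3 using 1 <;> try rfl
    rw [hsqrt]
    field_simp
  have h4 : HasDerivAt (fun x : ℝ => s + x) 1 t := (hasDerivAt_id t).const_add s
  have h5 := h4.mul h2
  simp only [coneS]
  convert h5 using 1 <;> try rfl
  rw [hsqrt]
  ring

lemma hasDerivAt_coneS_left (ℓ s t q : ℝ) (hq : 0 < q) (h : q^2 = (t-s)^2 + ℓ^2) :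
    HasDerivAt (fun x => coneS ℓ x t) (q - (s+t)*(t-s)/q) s := by
  have hpos : 0 < (t-s)^2 + ℓ^2 := h ▸ (by positivity)
  have hsqrt : Real.sqrt ((t-s)^2 + ℓ^2) = q := by
    rw [← h, Real.sqrt_sq hq.le]
  have h1 : HasDerivAt (fun x : ℝ => (t-x)^2 + ℓ^2) (-(2*(t-s))) s := by
    have := (((hasDerivAt_id s).const_sub t).pow 2).add_const (ℓ^2)
    simpa using this
  have h2 : HasDerivAt (fun x => Real.sqrt ((t-x)^2 + ℓ^2)) (-((t-s)/q)) s := by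
    have h3 := (Real.hasDerivAt_sqrt hpos.ne').comp s h1
    convert h3 using 1 <;> try rfl
    rw [hsqrt]
    field_simp
  have h4 : HasDerivAt (fun x : ℝ => x + t) 1 s := (hasDerivAt_id s).add_const t
  have h5 := h4.mul h2
  simp only [coneS]
  convert h5 using 1 <;> try rfl
  rw [hsqrt]
  ring

theorem stmt_9 (ℓ : ℝ) (hℓ : 0 < ℓ) (m : ℕ) (hm : 1 ≤ m)
    (ystar : ℝ) (hy : ℓ/2 < ystar) (a : ℝ) (ha : a = catenoidH ℓ m ystar) :
    ∀ i : ℕ, i < m →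
      deriv (fun t : ℝ =>
          coneT a ℓ m (Function.update (fun j : ℕ => catenoidH ℓ j ystar) i t))
        (catenoidH ℓ i ystar) = 0 := by
  intro i hi
  set h : ℕ → ℝ := fun j : ℕ => catenoidH ℓ j ystar with hh
  have hxi : catenoidH ℓ i ystar = h i := rfl
  set Q : ℕ → ℝ := segQ ℓ ystar with hQ
  set R : ℕ → ℝ := segR ℓ ystar with hR
  have hQpos : ∀ n, 0 < Q n := segQ_pos ℓ ystar hℓ hy
  have hQsq : ∀ n, Q n ^ 2 = (h (n+1) - h n)^2 + ℓ^2 := segQ_sq ℓ ystar hℓ hy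
  have hdivR : ∀ n, (h n + h (n+1)) * (h (n+1) - h n) / Q n = R n := by
    intro n
    rw [segR_eq ℓ ystar hℓ hy n]
    exact mul_div_cancel_right₀ _ (hQpos n).ne'
  -- derivative with respect to the right endpoint of segment n
  have dright : ∀ n, HasDerivAt (fun t => coneS ℓ (h n) t) (Q n + R n) (h (n+1)) := by
    intro n
    have := hasDerivAt_coneS_right ℓ (h n) (h (n+1)) (Q n) (hQpos n) (hQsq n)
    rwa [hdivR n] at this
  -- derivative with respect to the left endpoint of segment n
  have dleft : ∀ n, HasDerivAt (fun t => coneS ℓ t (h (n+1))) (Q n - R n) (h n) := by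
    intro n
    have := hasDerivAt_coneS_left ℓ (h n) (h (n+1)) (Q n) (hQpos n) (hQsq n)
    rwa [hdivR n] at this
  have ham : a = h m := ha
  -- component A
  have hA : HasDerivAt (fun t : ℝ => Function.update h i t 0 * ℓ)
      (if i = 0 then ℓ else 0) (h i) := by
    by_cases h0 : i = 0
    · subst h0
      simp only [Function.update_self, if_pos rfl]
      simpa using (hasDerivAt_id (h 0)).mul_const ℓ
    · simp only [Function.update_of_ne (fun hc => h0 hc.symm), if_neg h0]
      exact hasDerivAt_const _ _
  -- component B
  have hB : ∀ k ∈ range (m-1),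
      HasDerivAt (fun t : ℝ => coneS ℓ (Function.update h i t k) (Function.update h i t (k+1)))
        ((if k = i then Q k - R k else 0) + (if k + 1 = i then Q k + R k else 0)) (h i) := by
    intro k _
    by_cases hki : k = i
    · subst hki
      have hne : k + 1 ≠ k := by omega
      simp only [Function.update_self, Function.update_of_ne hne, if_pos rfl, if_neg hne,
        add_zero]
      exact dleft k
    · by_cases hki1 : k + 1 = i
      · subst hki1
        have hne : k ≠ k + 1 := by omega
        simp only [Function.update_of_ne hne, Function.update_self]
        simpa using dright k
      · simp only [Function.update_of_ne hki, Function.update_of_ne hki1, if_neg hki,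
          if_neg hki1, add_zero]
        exact hasDerivAt_const _ _
  have hBsum := HasDerivAt.fun_sum hB
  -- component C
  have hC : HasDerivAt (fun t : ℝ => coneS ℓ (Function.update h i t (m-1)) a)
      (if i = m - 1 then Q i - R i else 0) (h i) := by
    by_cases him : i = m - 1
    · rw [if_pos him]
      have hm1 : m - 1 = i := him.symm
      rw [hm1]
      simp only [Function.update_self]
      rw [ham, show m = i + 1 from by omega]
      exact dleft i
    · simp only [Function.update_of_ne (fun hc => him hc.symm), if_neg him]
      exact hasDerivAt_const _ _
  have hF := (hA.fun_add hBsum).fun_add hC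
  rw [hxi]
  simp only [coneT, ← hh]
  rw [hF.deriv]
  -- now pure arithmetic
  have hsum : (∑ k ∈ range (m-1),
      ((if k = i then Q k - R k else 0) + (if k + 1 = i then Q k + R k else 0)))
      = (if i < m - 1 then Q i - R i else 0) + (if 1 ≤ i then Q (i-1) + R (i-1) else 0) := by
    rw [Finset.sum_add_distrib]
    congr 1
    · rw [Finset.sum_ite_eq' (range (m-1)) i (fun k => Q k - R k)]
      simp [Finset.mem_range]
    · rcases Nat.eq_zero_or_pos i with h0 | hpos
      · subst h0
        rw [Finset.sum_eq_zero]
        · simp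
        · intro k _; simp
      · obtain ⟨j, rfl⟩ : ∃ j, i = j + 1 := ⟨i - 1, by omega⟩
        have : ∀ k, (k + 1 = j + 1) = (k = j) := by intro k; simp
        simp only [this]
        rw [Finset.sum_ite_eq' (range (m-1)) j (fun k => Q k + R k)]
        have hj : j ∈ range (m-1) ↔ j < m - 1 := Finset.mem_range
        simp only [Nat.add_sub_cancel]
        by_cases hjm : j < m - 1
        · rw [if_pos (hj.mpr hjm), if_pos (by omega)]
        · omega
  rw [hsum]
  simp only [hQ, hR]
  have hk0 := key_zero ℓ ystar hℓ hy
  by_cases h0 : i = 0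
  · subst h0
    rw [if_pos (rfl : (0:ℕ) = 0), if_neg (show ¬ (1:ℕ) ≤ 0 by omega)]
    by_cases hm1 : m = 1
    · subst hm1
      rw [if_neg (show ¬ (0:ℕ) < 1 - 1 by omega), if_pos (show (0:ℕ) = 1 - 1 by omega)]
      linarith
    · rw [if_pos (show (0:ℕ) < m - 1 by omega), if_neg (show ¬ (0:ℕ) = m - 1 by omega)]
      linarith
  · have h1 : 1 ≤ i := by omega
    have hkey := key_succ ℓ ystar hℓ hy (i-1)
    rw [Nat.sub_add_cancel h1] at hkey
    rw [if_neg h0, if_pos h1]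
    by_cases him : i = m - 1
    · rw [if_neg (show ¬ i < m - 1 by omega), if_pos him]
      linarith
    · rw [if_pos (show i < m - 1 by omega), if_neg him]
      linarith
end

section
/- (Lemma 4.2) Let ℓ > 0, m ≥ 1, and y > ℓ/2. Define the m×m symmetric tridiagonal matrix Ĥ_m(y) with entries Ĥ_{1,1}(y) = ∂²S_ℓ/∂s²(h_{0,ℓ}(y), h_{1,ℓ}(y)); Ĥ_{i,i}(y) = ∂²S_ℓ/∂t²(h_{i−2,ℓ}(y), h_{i−1,ℓ}(y)) + ∂²S_ℓ/∂s²(h_{i−1,ℓ}(y), h_{i,ℓ}(y)) for 2 ≤ i ≤ m; Ĥ_{i,i+1}(y) = Ĥ_{i+1,i}(y) = ∂²S_ℓ/∂s∂t(h_{i−1,ℓ}(y), h_{i,ℓ}(y)) for 1 ≤ i ≤ m−1; and Ĥ_{i,j}(y) = 0 when |i−j| ≥ 2. Then det Ĥ_m(y) = (−1)^m · Ĥ_{1,2}(y)·Ĥ_{2,3}(y)···Ĥ_{m,m+1}(y) · h'_{m,ℓ}(y), where Ĥ_{m,m+1}(y) := ∂²S_ℓ/∂s∂t(h_{m−1,ℓ}(y),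 h_{m,ℓ}(y)) and h'_{m,ℓ} denotes the derivative of h_{m,ℓ}. -/
open Finset

/-- `∂²S/∂s²` at `(s,t)`. -/
noncomputable def coneSss (ℓ s t : ℝ) : ℝ :=
  deriv (fun u : ℝ => deriv (fun v : ℝ => coneS ℓ v t) u) s

/-- `∂²S/∂t²` at `(s,t)`. -/
noncomputable def coneStt (ℓ s t : ℝ) : ℝ :=
  deriv (fun u : ℝ => deriv (fun v : ℝ => coneS ℓ s v) u) t

/-- `∂²S/∂s∂t` at `(s,t)`. -/
noncomputable def coneSst (ℓ s t : ℝ) : ℝ :=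
  deriv (fun u : ℝ => deriv (fun v : ℝ => coneS ℓ u v) t) s

/-- The symmetric tridiagonal matrix `Ĥ_m(y)` (indices shifted to start at `0`). -/
noncomputable def Hhat (ℓ y : ℝ) (m : ℕ) : Matrix (Fin m) (Fin m) ℝ :=
  Matrix.of fun i j : Fin m =>
    if (i : ℕ) = (j : ℕ) then
      (if (i : ℕ) = 0 then coneSss ℓ (catenoidH ℓ 0 y) (catenoidH ℓ 1 y)
       else coneStt ℓ (catenoidH ℓ ((i : ℕ) - 1) y) (catenoidH ℓ (i : ℕ) y)
            + coneSss ℓ (catenoidH ℓ (i : ℕ) y) (catenoidH ℓ ((i : ℕ) + 1) y))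
    else if (i : ℕ) + 1 = (j : ℕ) then
      coneSst ℓ (catenoidH ℓ (i : ℕ) y) (catenoidH ℓ ((i : ℕ) + 1) y)
    else if (j : ℕ) + 1 = (i : ℕ) then
      coneSst ℓ (catenoidH ℓ (j : ℕ) y) (catenoidH ℓ ((j : ℕ) + 1) y)
    else 0


noncomputable def coneSs (ℓ s t : ℝ) : ℝ :=
  Real.sqrt ((t - s)^2 + ℓ^2) + (s + t) * ((s - t) / Real.sqrt ((t - s)^2 + ℓ^2))

noncomputable def coneStf (ℓ s t : ℝ) : ℝ :=
  Real.sqrt ((t - s)^2 + ℓ^2) + (s + t) * ((t - s) / Real.sqrt ((t - s)^2 + ℓ^2))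

variable {ℓ s t : ℝ}

lemma rad_pos (hℓ : ℓ ≠ 0) (s t : ℝ) : 0 < (t - s)^2 + ℓ^2 := by positivity

lemma sqrt_rad_pos (hℓ : ℓ ≠ 0) (s t : ℝ) : 0 < Real.sqrt ((t - s)^2 + ℓ^2) :=
  Real.sqrt_pos.2 (rad_pos hℓ s t)

lemma hasDerivAt_rad (s t : ℝ) :
    HasDerivAt (fun x : ℝ => (t - x)^2 + ℓ^2) (2 * (s - t)) s := by
  have h : HasDerivAt (fun x : ℝ => (t - x)^2 + ℓ^2) (2 * (t - s)^(2-1) * (0 - 1)) s :=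
    (((hasDerivAt_const s t).sub (hasDerivAt_id s)).pow 2).add_const _
  convert h using 1; ring

lemma hasDerivAt_rad' (s t : ℝ) :
    HasDerivAt (fun x : ℝ => (x - s)^2 + ℓ^2) (2 * (t - s)) t := by
  have h : HasDerivAt (fun x : ℝ => (x - s)^2 + ℓ^2) (2 * (t - s)^(2-1) * (1 - 0)) t :=
    (((hasDerivAt_id t).sub (hasDerivAt_const t s)).pow 2).add_const _
  convert h using 1; ring

lemma hasDerivAt_coneS_s (hℓ : ℓ ≠ 0) (s t : ℝ) :
    HasDerivAt (fun x : ℝ => coneS ℓ x t) (coneSs ℓ s t) s := by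
  have hr := sqrt_rad_pos hℓ s t
  have h1 : HasDerivAt (fun x : ℝ => Real.sqrt ((t - x)^2 + ℓ^2))
      (2 * (s - t) / (2 * Real.sqrt ((t - s)^2 + ℓ^2))) s :=
    (hasDerivAt_rad s t).sqrt (rad_pos hℓ s t).ne'
  have h2 : HasDerivAt (fun x : ℝ => (x + t) * Real.sqrt ((t - x)^2 + ℓ^2))
      (1 * Real.sqrt ((t - s)^2 + ℓ^2) +
        (s + t) * (2 * (s - t) / (2 * Real.sqrt ((t - s)^2 + ℓ^2)))) s :=
    ((hasDerivAt_id s).add_const t).mul h1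
  have : coneSs ℓ s t = 1 * Real.sqrt ((t - s)^2 + ℓ^2) +
      (s + t) * (2 * (s - t) / (2 * Real.sqrt ((t - s)^2 + ℓ^2))) := by
    have hr2 : Real.sqrt ((t - s)^2 + ℓ^2) ^ 2 = (t - s)^2 + ℓ^2 :=
      Real.sq_sqrt (rad_pos hℓ s t).le
    unfold coneSs; field_simp
  rw [this]; exact h2

lemma hasDerivAt_coneS_t (hℓ : ℓ ≠ 0) (s t : ℝ) :
    HasDerivAt (fun x : ℝ => coneS ℓ s x) (coneStf ℓ s t) t := by
  have hr := sqrt_rad_pos hℓ s t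
  have h1 : HasDerivAt (fun x : ℝ => Real.sqrt ((x - s)^2 + ℓ^2))
      (2 * (t - s) / (2 * Real.sqrt ((t - s)^2 + ℓ^2))) t :=
    (hasDerivAt_rad' s t).sqrt (rad_pos hℓ s t).ne'
  have h2 : HasDerivAt (fun x : ℝ => (s + x) * Real.sqrt ((x - s)^2 + ℓ^2))
      (1 * Real.sqrt ((t - s)^2 + ℓ^2) +
        (s + t) * (2 * (t - s) / (2 * Real.sqrt ((t - s)^2 + ℓ^2)))) t :=
    ((hasDerivAt_id t).const_add s).mul h1
  have : coneStf ℓ s t = 1 * Real.sqrt ((t - s)^2 + ℓ^2) +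
      (s + t) * (2 * (t - s) / (2 * Real.sqrt ((t - s)^2 + ℓ^2))) := by
    have hr2 : Real.sqrt ((t - s)^2 + ℓ^2) ^ 2 = (t - s)^2 + ℓ^2 :=
      Real.sq_sqrt (rad_pos hℓ s t).le
    unfold coneStf; field_simp
  rw [this]; exact h2

lemma coneSss_eq (hℓ : ℓ ≠ 0) (s t : ℝ) :
    coneSss ℓ s t =
      (2*(s-t)*((t-s)^2+ℓ^2) + (s+t)*ℓ^2) / (Real.sqrt ((t-s)^2+ℓ^2))^3 := by
  have hR := rad_pos hℓ s t
  have hr := sqrt_rad_pos hℓ s t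
  have hfun : (fun u : ℝ => deriv (fun v : ℝ => coneS ℓ v t) u)
      = fun u : ℝ => Real.sqrt ((t-u)^2+ℓ^2) + (u+t)*(u-t)/Real.sqrt ((t-u)^2+ℓ^2) := by
    funext u
    rw [(hasDerivAt_coneS_s hℓ u t).deriv]
    unfold coneSs; rw [mul_div_assoc]
  unfold coneSss; rw [hfun]
  have d1 : HasDerivAt (fun u : ℝ => Real.sqrt ((t-u)^2+ℓ^2))
      (2*(s-t)/(2*Real.sqrt ((t-s)^2+ℓ^2))) s := (hasDerivAt_rad s t).sqrt hR.ne'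
  have dnum : HasDerivAt (fun u : ℝ => (u+t)*(u-t)) (1*(s-t)+(s+t)*1) s :=
    ((hasDerivAt_id s).add_const t).mul ((hasDerivAt_id s).sub_const t)
  have d2 := d1.add (dnum.div d1 hr.ne')
  erw [d2.deriv]
  have hr2 : Real.sqrt ((t-s)^2+ℓ^2)^2 = (t-s)^2+ℓ^2 := Real.sq_sqrt hR.le
  set x := Real.sqrt ((t-s)^2+ℓ^2) with hxdef
  rw [← hr2]
  field_simp
  linear_combination (s+t) * hr2

lemma coneStt_eq (hℓ : ℓ ≠ 0) (s t : ℝ) :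
    coneStt ℓ s t =
      (2*(t-s)*((t-s)^2+ℓ^2) + (s+t)*ℓ^2) / (Real.sqrt ((t-s)^2+ℓ^2))^3 := by
  have hR := rad_pos hℓ s t
  have hr := sqrt_rad_pos hℓ s t
  have hfun : (fun u : ℝ => deriv (fun v : ℝ => coneS ℓ s v) u)
      = fun u : ℝ => Real.sqrt ((u-s)^2+ℓ^2) + (s+u)*(u-s)/Real.sqrt ((u-s)^2+ℓ^2) := by
    funext u
    rw [(hasDerivAt_coneS_t hℓ s u).deriv]
    unfold coneStf; rw [mul_div_assoc]
  unfold coneStt; rw [hfun]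
  have d1 : HasDerivAt (fun u : ℝ => Real.sqrt ((u-s)^2+ℓ^2))
      (2*(t-s)/(2*Real.sqrt ((t-s)^2+ℓ^2))) t := (hasDerivAt_rad' s t).sqrt hR.ne'
  have dnum : HasDerivAt (fun u : ℝ => (s+u)*(u-s)) (1*(t-s)+(s+t)*1) t :=
    ((hasDerivAt_id t).const_add s).mul ((hasDerivAt_id t).sub_const s)
  have d2 := d1.add (dnum.div d1 hr.ne')
  erw [d2.deriv]
  have hr2 : Real.sqrt ((t-s)^2+ℓ^2)^2 = (t-s)^2+ℓ^2 := Real.sq_sqrt hR.le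
  set x := Real.sqrt ((t-s)^2+ℓ^2) with hxdef
  rw [← hr2]
  field_simp
  linear_combination (s+t) * hr2

lemma coneSst_eq (hℓ : ℓ ≠ 0) (s t : ℝ) :
    coneSst ℓ s t = -(s+t)*ℓ^2 / (Real.sqrt ((t-s)^2+ℓ^2))^3 := by
  have hR := rad_pos hℓ s t
  have hr := sqrt_rad_pos hℓ s t
  have hfun : (fun u : ℝ => deriv (fun v : ℝ => coneS ℓ u v) t)
      = fun u : ℝ => Real.sqrt ((t-u)^2+ℓ^2) + (u+t)*(t-u)/Real.sqrt ((t-u)^2+ℓ^2) := by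
    funext u
    rw [(hasDerivAt_coneS_t hℓ u t).deriv]
    unfold coneStf; rw [mul_div_assoc]
  unfold coneSst; rw [hfun]
  have d1 : HasDerivAt (fun u : ℝ => Real.sqrt ((t-u)^2+ℓ^2))
      (2*(s-t)/(2*Real.sqrt ((t-s)^2+ℓ^2))) s := (hasDerivAt_rad s t).sqrt hR.ne'
  have dnum : HasDerivAt (fun u : ℝ => (u+t)*(t-u)) (1*(t-s)+(s+t)*(0-1)) s :=
    ((hasDerivAt_id s).add_const t).mul ((hasDerivAt_const s t).sub (hasDerivAt_id s))
  have d2 := d1.add (dnum.div d1 hr.ne')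
  erw [d2.deriv]
  have hr2 : Real.sqrt ((t-s)^2+ℓ^2)^2 = (t-s)^2+ℓ^2 := Real.sq_sqrt hR.le
  set x := Real.sqrt ((t-s)^2+ℓ^2) with hxdef
  field_simp
  linear_combination (-(s+t)) * hr2

noncomputable def catenoidHD (ℓ : ℝ) (n : ℕ) (y : ℝ) : ℝ :=
  ((2*y+ℓ) * ((2*y+ℓ)^n)^2 * ((2*y-ℓ) - 2*n*ℓ) + (2*y-ℓ) * ((2*y-ℓ)^n)^2 * ((2*y+ℓ) + 2*n*ℓ)) /
  (2 * ((2*y+ℓ) * (2*y-ℓ)) * ((2*y+ℓ)^n * (2*y-ℓ)^n))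

lemma hasDerivAt_catenoidH_s11 {ℓ y : ℝ} (hu : 0 < 2*y+ℓ) (hv : 0 < 2*y-ℓ) (n : ℕ) :
    HasDerivAt (catenoidH ℓ n) (catenoidHD ℓ n y) y := by
  have huv : (0:ℝ) < 4*y^2 - ℓ^2 := by nlinarith
  have h1 : HasDerivAt (fun x : ℝ => 2*x+ℓ) 2 y := by
    simpa using ((hasDerivAt_id y).const_mul 2).add_const ℓ
  have h2 : HasDerivAt (fun x : ℝ => 2*x-ℓ) 2 y := by
    simpa using ((hasDerivAt_id y).const_mul 2).sub_const ℓ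
  have hN : HasDerivAt (fun x : ℝ => (2*x+ℓ)^(2*n+1) + (2*x-ℓ)^(2*n+1))
      ((2*n+1 : ℕ) * (2*y+ℓ)^(2*n) * 2 + (2*n+1 : ℕ) * (2*y-ℓ)^(2*n) * 2) y := by
    have := (h1.pow (2*n+1)).add (h2.pow (2*n+1))
    simp only [Nat.add_sub_cancel] at this; exact this
  have hq : HasDerivAt (fun x : ℝ => 4*x^2 - ℓ^2) (8*y) y := by
    have := (((hasDerivAt_id y).pow 2).const_mul 4).sub_const (ℓ^2)
    refine this.congr_deriv ?_
    simp; ring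
  have hDen : HasDerivAt (fun x : ℝ => 4 * (4*x^2-ℓ^2)^n)
      (4 * ((n : ℕ) * (4*y^2-ℓ^2)^(n-1) * (8*y))) y := (hq.pow n).const_mul 4
  have hden_ne : (4 : ℝ) * (4*y^2-ℓ^2)^n ≠ 0 := by positivity
  have hdiv := hN.div hDen hden_ne
  have : catenoidH ℓ n = fun x : ℝ =>
      ((2*x + ℓ)^(2*n+1) + (2*x - ℓ)^(2*n+1)) / (4 * (4*x^2 - ℓ^2)^n) := rfl
  rw [this]
  refine hdiv.congr_deriv ?_
  symm
  have hu' := hu.ne'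
  have hv' := hv.ne'
  have hP : ((2:ℝ)*y+ℓ)^n ≠ 0 := pow_ne_zero _ hu'
  have hQ : ((2:ℝ)*y-ℓ)^n ≠ 0 := pow_ne_zero _ hv'
  rcases n with _ | k
  · unfold catenoidHD; push_cast; field_simp; ring
  · unfold catenoidHD
    simp only [Nat.add_sub_cancel]
    simp only [show (4:ℝ)*y^2 - ℓ^2 = (2*y+ℓ)*(2*y-ℓ) by ring, mul_pow]
    push_cast
    field_simp
    ring

lemma sqrt_catenoidH {ℓ y : ℝ} (hu : 0 < 2*y+ℓ) (hv : 0 < 2*y-ℓ) (hℓ : 0 < ℓ) (n : ℕ) :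
    Real.sqrt ((catenoidH ℓ (n+1) y - catenoidH ℓ n y)^2 + ℓ^2)
      = ℓ * (((2*y+ℓ)^(n+1))^2 + ((2*y-ℓ)^(n+1))^2) / (2 * ((2*y+ℓ)^(n+1) * (2*y-ℓ)^(n+1))) := by
  have hu' := hu.ne'
  have hv' := hv.ne'
  have hP : ((2:ℝ)*y+ℓ)^(n+1) ≠ 0 := pow_ne_zero _ hu'
  have hQ : ((2:ℝ)*y-ℓ)^(n+1) ≠ 0 := pow_ne_zero _ hv'
  have key : (catenoidH ℓ (n+1) y - catenoidH ℓ n y)^2 + ℓ^2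
      = (ℓ * (((2*y+ℓ)^(n+1))^2 + ((2*y-ℓ)^(n+1))^2) / (2 * ((2*y+ℓ)^(n+1) * (2*y-ℓ)^(n+1))))^2 := by
    unfold catenoidH
    simp only [show (4:ℝ)*y^2 - ℓ^2 = (2*y+ℓ)*(2*y-ℓ) by ring, mul_pow]
    field_simp
    ring
  rw [key, Real.sqrt_sq (by positivity)]

lemma coneSst_h {ℓ y : ℝ} (hℓ : 0 < ℓ) (hu : 0 < 2*y+ℓ) (hv : 0 < 2*y-ℓ) (n : ℕ) :
    coneSst ℓ (catenoidH ℓ n y) (catenoidH ℓ (n+1) y)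
      = -(8*y*((2*y+ℓ)^(n+1))^2*((2*y-ℓ)^(n+1))^2)
          / (ℓ*(((2*y+ℓ)^(n+1))^2+((2*y-ℓ)^(n+1))^2)^2) := by
  have hℓ' := hℓ.ne'
  have hu' := hu.ne'
  have hv' := hv.ne'
  rw [coneSst_eq hℓ', sqrt_catenoidH hu hv hℓ n]
  unfold catenoidH
  simp only [show (4:ℝ)*y^2 - ℓ^2 = (2*y+ℓ)*(2*y-ℓ) by ring, mul_pow]
  have E1 : ∀ x : ℝ, x^(2*n+1) = (x^n)^2*x := fun x => by
    rw [pow_succ, Nat.mul_comm, pow_mul]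
  have E2 : ∀ x : ℝ, x^(2*(n+1)+1) = (x^n)^2*x^3 := fun x => by
    rw [show 2*(n+1)+1 = n*2+3 by ring, pow_add, pow_mul]
  have E4 : ∀ x : ℝ, x^(n+1) = x^n*x := fun x => pow_succ x n
  simp only [E1, E2, E4]
  obtain ⟨A, hA⟩ : ∃ A, (2*y+ℓ)^n = A := ⟨_, rfl⟩
  obtain ⟨B, hB⟩ : ∃ B, (2*y-ℓ)^n = B := ⟨_, rfl⟩
  rw [hA, hB]
  have hA0 : A ≠ 0 := hA ▸ pow_ne_zero _ hu'
  have hB0 : B ≠ 0 := hB ▸ pow_ne_zero _ hv'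
  have hS1 : (0:ℝ) < (A*(2*y+ℓ))^2 + (B*(2*y-ℓ))^2 :=
    add_pos_of_pos_of_nonneg
      ((sq_nonneg _).lt_of_ne (Ne.symm (pow_ne_zero 2 (mul_ne_zero hA0 hu')))) (sq_nonneg _)
  have hS1' := hS1.ne'
  field_simp
  ring

lemma coneSss_h {ℓ y : ℝ} (hℓ : 0 < ℓ) (hu : 0 < 2*y+ℓ) (hv : 0 < 2*y-ℓ) (n : ℕ) :
    coneSss ℓ (catenoidH ℓ n y) (catenoidH ℓ (n+1) y)
      = (8*y*((2*y+ℓ)^(n+1))^2*((2*y-ℓ)^(n+1))^2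
          - 2*ℓ*(((2*y+ℓ)^(n+1))^2-((2*y-ℓ)^(n+1))^2)*(((2*y+ℓ)^(n+1))^2+((2*y-ℓ)^(n+1))^2))
          / (ℓ*(((2*y+ℓ)^(n+1))^2+((2*y-ℓ)^(n+1))^2)^2) := by
  have hℓ' := hℓ.ne'
  have hu' := hu.ne'
  have hv' := hv.ne'
  rw [coneSss_eq hℓ', sqrt_catenoidH hu hv hℓ n]
  unfold catenoidH
  simp only [show (4:ℝ)*y^2 - ℓ^2 = (2*y+ℓ)*(2*y-ℓ) by ring, mul_pow]
  have E1 : ∀ x : ℝ, x^(2*n+1) = (x^n)^2*x := fun x => by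
    rw [pow_succ, Nat.mul_comm, pow_mul]
  have E2 : ∀ x : ℝ, x^(2*(n+1)+1) = (x^n)^2*x^3 := fun x => by
    rw [show 2*(n+1)+1 = n*2+3 by ring, pow_add, pow_mul]
  have E4 : ∀ x : ℝ, x^(n+1) = x^n*x := fun x => pow_succ x n
  simp only [E1, E2, E4]
  obtain ⟨A, hA⟩ : ∃ A, (2*y+ℓ)^n = A := ⟨_, rfl⟩
  obtain ⟨B, hB⟩ : ∃ B, (2*y-ℓ)^n = B := ⟨_, rfl⟩
  rw [hA, hB]
  have hA0 : A ≠ 0 := hA ▸ pow_ne_zero _ hu'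
  have hB0 : B ≠ 0 := hB ▸ pow_ne_zero _ hv'
  have hS1 : (0:ℝ) < (A*(2*y+ℓ))^2 + (B*(2*y-ℓ))^2 :=
    add_pos_of_pos_of_nonneg
      ((sq_nonneg _).lt_of_ne (Ne.symm (pow_ne_zero 2 (mul_ne_zero hA0 hu')))) (sq_nonneg _)
  have hS1' := hS1.ne'
  field_simp
  ring

lemma coneStt_h {ℓ y : ℝ} (hℓ : 0 < ℓ) (hu : 0 < 2*y+ℓ) (hv : 0 < 2*y-ℓ) (n : ℕ) :
    coneStt ℓ (catenoidH ℓ n y) (catenoidH ℓ (n+1) y)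
      = (8*y*((2*y+ℓ)^(n+1))^2*((2*y-ℓ)^(n+1))^2
          + 2*ℓ*(((2*y+ℓ)^(n+1))^2-((2*y-ℓ)^(n+1))^2)*(((2*y+ℓ)^(n+1))^2+((2*y-ℓ)^(n+1))^2))
          / (ℓ*(((2*y+ℓ)^(n+1))^2+((2*y-ℓ)^(n+1))^2)^2) := by
  have hℓ' := hℓ.ne'
  have hu' := hu.ne'
  have hv' := hv.ne'
  rw [coneStt_eq hℓ', sqrt_catenoidH hu hv hℓ n]
  unfold catenoidH
  simp only [show (4:ℝ)*y^2 - ℓ^2 = (2*y+ℓ)*(2*y-ℓ) by ring, mul_pow]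
  have E1 : ∀ x : ℝ, x^(2*n+1) = (x^n)^2*x := fun x => by
    rw [pow_succ, Nat.mul_comm, pow_mul]
  have E2 : ∀ x : ℝ, x^(2*(n+1)+1) = (x^n)^2*x^3 := fun x => by
    rw [show 2*(n+1)+1 = n*2+3 by ring, pow_add, pow_mul]
  have E4 : ∀ x : ℝ, x^(n+1) = x^n*x := fun x => pow_succ x n
  simp only [E1, E2, E4]
  obtain ⟨A, hA⟩ : ∃ A, (2*y+ℓ)^n = A := ⟨_, rfl⟩
  obtain ⟨B, hB⟩ : ∃ B, (2*y-ℓ)^n = B := ⟨_, rfl⟩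
  rw [hA, hB]
  have hA0 : A ≠ 0 := hA ▸ pow_ne_zero _ hu'
  have hB0 : B ≠ 0 := hB ▸ pow_ne_zero _ hv'
  have hS1 : (0:ℝ) < (A*(2*y+ℓ))^2 + (B*(2*y-ℓ))^2 :=
    add_pos_of_pos_of_nonneg
      ((sq_nonneg _).lt_of_ne (Ne.symm (pow_ne_zero 2 (mul_ne_zero hA0 hu')))) (sq_nonneg _)
  have hS1' := hS1.ne'
  field_simp
  ring

lemma key1 {ℓ y : ℝ} (hℓ : 0 < ℓ) (hu : 0 < 2*y+ℓ) (hv : 0 < 2*y-ℓ) :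
    coneSss ℓ (catenoidH ℓ 0 y) (catenoidH ℓ 1 y)
      + coneSst ℓ (catenoidH ℓ 0 y) (catenoidH ℓ 1 y) * catenoidHD ℓ 1 y = 0 := by
  have hℓ' := hℓ.ne'
  have hu' := hu.ne'
  have hv' := hv.ne'
  have e1 := coneSss_h hℓ hu hv 0
  have e2 := coneSst_h hℓ hu hv 0
  norm_num at e1 e2
  rw [e1, e2]
  unfold catenoidHD
  norm_num
  have hS1 : (0:ℝ) < ((2*y+ℓ))^2 + ((2*y-ℓ))^2 := by positivity
  have hS1' := hS1.ne'
  have hu2 : y*2+ℓ ≠ 0 := by rw [mul_comm]; exact hu'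
  have hv2 : y*2-ℓ ≠ 0 := by rw [mul_comm]; exact hv'
  field_simp
  ring

set_option maxHeartbeats 4000000 in
lemma key2 {ℓ y : ℝ} (hℓ : 0 < ℓ) (hu : 0 < 2*y+ℓ) (hv : 0 < 2*y-ℓ) (n : ℕ) :
    coneSst ℓ (catenoidH ℓ n y) (catenoidH ℓ (n+1) y) * catenoidHD ℓ n y
      + (coneStt ℓ (catenoidH ℓ n y) (catenoidH ℓ (n+1) y)
          + coneSss ℓ (catenoidH ℓ (n+1) y) (catenoidH ℓ (n+2) y)) * catenoidHD ℓ (n+1) y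
      + coneSst ℓ (catenoidH ℓ (n+1) y) (catenoidH ℓ (n+2) y) * catenoidHD ℓ (n+2) y = 0 := by
  have hℓ' := hℓ.ne'
  have hu' := hu.ne'
  have hv' := hv.ne'
  have hnn : n+1+1 = n+2 := rfl
  have e1 := coneSst_h hℓ hu hv n
  have e2 := coneStt_h hℓ hu hv n
  have e3 := coneSss_h hℓ hu hv (n+1)
  have e4 := coneSst_h hℓ hu hv (n+1)
  rw [hnn] at e3 e4
  rw [e1, e2, e3, e4]
  unfold catenoidHD
  have E4 : ∀ x : ℝ, x^(n+1) = x^n*x := fun x => pow_succ x n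
  have E5 : ∀ x : ℝ, x^(n+2) = x^n*x^2 := fun x => pow_add x n 2
  simp only [E5, E4]
  obtain ⟨A, hA⟩ : ∃ A, (2*y+ℓ)^n = A := ⟨_, rfl⟩
  obtain ⟨B, hB⟩ : ∃ B, (2*y-ℓ)^n = B := ⟨_, rfl⟩
  rw [hA, hB]
  have hA0 : A ≠ 0 := hA ▸ pow_ne_zero _ hu'
  have hB0 : B ≠ 0 := hB ▸ pow_ne_zero _ hv'
  have hS1 : (0:ℝ) < (A*(2*y+ℓ))^2 + (B*(2*y-ℓ))^2 :=
    add_pos_of_pos_of_nonneg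
      ((sq_nonneg _).lt_of_ne (Ne.symm (pow_ne_zero 2 (mul_ne_zero hA0 hu')))) (sq_nonneg _)
  have hS2 : (0:ℝ) < (A*((2*y+ℓ)*(2*y+ℓ)))^2 + (B*((2*y-ℓ)*(2*y-ℓ)))^2 :=
    add_pos_of_pos_of_nonneg
      ((sq_nonneg _).lt_of_ne (Ne.symm (pow_ne_zero 2 (mul_ne_zero hA0
        (mul_ne_zero hu' hu'))))) (sq_nonneg _)
  have hS1' := hS1.ne'
  have hS2' := hS2.ne'
  have hu2 : y*2+ℓ ≠ 0 := by rw [mul_comm]; exact hu'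
  have hv2 : y*2-ℓ ≠ 0 := by rw [mul_comm]; exact hv'
  have hT1 : A^2*(y*2+ℓ)^2 + B^2*(y*2-ℓ)^2 ≠ 0 := by convert hS1' using 1; ring
  have hT2 : A^2*(y*2+ℓ)^4 + B^2*(y*2-ℓ)^4 ≠ 0 := by convert hS2' using 1; ring
  push_cast
  field_simp
  ring


noncomputable def tri (d e : ℕ → ℝ) (m : ℕ) : Matrix (Fin m) (Fin m) ℝ :=
  Matrix.of fun i j : Fin m =>
    if (i : ℕ) = (j : ℕ) then d (i : ℕ)
    else if (i : ℕ) + 1 = (j : ℕ) then e (i : ℕ)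
    else if (j : ℕ) + 1 = (i : ℕ) then e (j : ℕ)
    else 0

lemma tri_sub (d e : ℕ → ℝ) (m : ℕ) :
    (tri d e (m+1)).submatrix Fin.castSucc Fin.castSucc = tri d e m := by
  ext i j
  simp [tri, Matrix.submatrix_apply]

lemma tri_det_rec (d e : ℕ → ℝ) (m : ℕ) :
    (tri d e (m+2)).det
      = d (m+1) * (tri d e (m+1)).det - e m ^ 2 * (tri d e m).det := by
  set T := tri d e (m+2) with hT
  rw [Matrix.det_succ_row T (Fin.last (m+1))]
  rw [Fin.sum_univ_castSucc, Fin.sum_univ_castSucc]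
  have hzero : ∀ j : Fin m,
      T (Fin.last (m+1)) ((j.castSucc).castSucc) = 0 := by
    intro j
    have hj : (j : ℕ) < m := j.isLt
    simp only [hT, tri, Matrix.of_apply, Fin.coe_castSucc, Fin.val_last]
    split_ifs with h1 h2 h3 <;> first | rfl | omega
  have h1 : ∑ j : Fin m,
      (-1 : ℝ) ^ ((Fin.last (m+1) : ℕ) + ((j.castSucc).castSucc : ℕ)) *
        T (Fin.last (m+1)) ((j.castSucc).castSucc) *
        (T.submatrix (Fin.last (m+1)).succAbove ((j.castSucc).castSucc).succAbove).det = 0 := by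
    apply Finset.sum_eq_zero
    intro j _
    rw [hzero j]
    ring
  rw [h1, zero_add]
  -- main diagonal term
  have hdiag : T (Fin.last (m+1)) (Fin.last (m+1)) = d (m+1) := by
    simp [hT, tri]
  have hsignd : (-1 : ℝ) ^ ((Fin.last (m+1) : ℕ) + (Fin.last (m+1) : ℕ)) = 1 := by
    rw [Fin.val_last, show (m+1+(m+1)) = 2*(m+1) by ring, pow_mul]
    norm_num
  have hsubd : (T.submatrix (Fin.last (m+1)).succAbove (Fin.last (m+1)).succAbove).det
      = (tri d e (m+1)).det := by
    rw [Fin.succAbove_last, hT, tri_sub]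
  -- off-diagonal term
  have hoff : T (Fin.last (m+1)) ((Fin.last m).castSucc) = e m := by
    simp only [hT, tri, Matrix.of_apply, Fin.coe_castSucc, Fin.val_last]
    split_ifs with h1 h2 h3 <;> first | rfl | omega
  have hsigno : (-1 : ℝ) ^ ((Fin.last (m+1) : ℕ) + (((Fin.last m).castSucc : Fin (m+2)) : ℕ)) = -1 := by
    simp only [Fin.val_last, Fin.coe_castSucc]
    rw [show (m+1+m) = 2*m+1 by ring, pow_add, pow_mul]
    norm_num
  -- the minor B
  set B := T.submatrix Fin.castSucc ((Fin.last m).castSucc.succAbove) with hB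
  have hsubB : (T.submatrix (Fin.last (m+1)).succAbove ((Fin.last m).castSucc).succAbove) = B := by
    rw [Fin.succAbove_last]
  have hBdet : B.det = e m * (tri d e m).det := by
    rw [Matrix.det_succ_column B (Fin.last m)]
    rw [Fin.sum_univ_castSucc]
    have hcol : ∀ i : Fin (m+1), B i (Fin.last m) = T i.castSucc (Fin.last (m+1)) := by
      intro i
      rw [hB, Matrix.submatrix_apply]
      congr 1
      rw [Fin.succAbove_of_le_castSucc _ _ (le_refl _)]
      rfl
    have hz2 : ∀ i : Fin m, B i.castSucc (Fin.last m) = 0 := by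
      intro i
      rw [hcol]
      have : (i : ℕ) < m := i.isLt
      simp only [hT, tri, Matrix.of_apply, Fin.coe_castSucc, Fin.val_last]
      split_ifs with h1 h2 h3 <;> first | rfl | omega
    have h2 : ∑ i : Fin m,
        (-1 : ℝ) ^ ((i.castSucc : ℕ) + ((Fin.last m) : ℕ)) * B i.castSucc (Fin.last m) *
          (B.submatrix (i.castSucc).succAbove (Fin.last m).succAbove).det = 0 := by
      apply Finset.sum_eq_zero
      intro i _
      rw [hz2 i]
      ring
    rw [h2, zero_add]
    have hBe : B (Fin.last m) (Fin.last m) = e m := by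
      rw [hcol]
      simp only [hT, tri, Matrix.of_apply, Fin.coe_castSucc, Fin.val_last]
      split_ifs with h1 h2 h3 <;> first | rfl | omega
    have hsign2 : (-1 : ℝ) ^ (((Fin.last m) : ℕ) + ((Fin.last m) : ℕ)) = 1 := by
      rw [Fin.val_last, show (m+m) = 2*m by ring, pow_mul]
      norm_num
    have hsub2 : B.submatrix (Fin.last m).succAbove (Fin.last m).succAbove = tri d e m := by
      rw [Fin.succAbove_last, hB, Matrix.submatrix_submatrix]
      have hfun : ((Fin.last m).castSucc.succAbove ∘ Fin.castSucc : Fin m → Fin (m+2))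
          = Fin.castSucc ∘ Fin.castSucc := by
        funext k
        simp only [Function.comp_apply]
        rw [Fin.succAbove_of_castSucc_lt]
        rw [Fin.castSucc_lt_castSucc_iff]
        exact Fin.castSucc_lt_last k
      rw [hfun, ← Matrix.submatrix_submatrix, hT, tri_sub, tri_sub]
    rw [hBe, hsign2, hsub2]
    ring
  rw [hdiag, hsignd, hsubd, hoff, hsigno, hsubB, hBdet]
  ring

theorem stmt_11 (ℓ : ℝ) (hℓ : 0 < ℓ) (m : ℕ) (hm : 1 ≤ m) (y : ℝ) (hy : ℓ/2 < y) :
    (Hhat ℓ y m).det =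
      (-1 : ℝ)^m *
        (∏ j ∈ range m, coneSst ℓ (catenoidH ℓ j y) (catenoidH ℓ (j+1) y)) *
        deriv (catenoidH ℓ m) y := by
  have hu : (0:ℝ) < 2*y+ℓ := by linarith
  have hv : (0:ℝ) < 2*y-ℓ := by linarith
  have htri : ∀ k : ℕ, Hhat ℓ y k = tri
      (fun i => if i = 0 then coneSss ℓ (catenoidH ℓ 0 y) (catenoidH ℓ 1 y)
        else coneStt ℓ (catenoidH ℓ (i-1) y) (catenoidH ℓ i y)
          + coneSss ℓ (catenoidH ℓ i y) (catenoidH ℓ (i+1) y))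
      (fun i => coneSst ℓ (catenoidH ℓ i y) (catenoidH ℓ (i+1) y)) k := fun k => rfl
  have main : ∀ k : ℕ, (Hhat ℓ y k).det =
      (-1:ℝ)^k * (∏ j ∈ range k, coneSst ℓ (catenoidH ℓ j y) (catenoidH ℓ (j+1) y)) *
        catenoidHD ℓ k y := by
    intro k
    induction k using Nat.twoStepInduction with
    | zero =>
        have h0 : catenoidHD ℓ 0 y = 1 := by
          unfold catenoidHD
          push_cast
          norm_num
          field_simp
          ring
        simp [Matrix.det_fin_zero, h0]
    | one =>
        rw [Matrix.det_fin_one]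
        have h1 : Hhat ℓ y 1 0 0 = coneSss ℓ (catenoidH ℓ 0 y) (catenoidH ℓ 1 y) := by
          simp [Hhat]
        rw [h1, Finset.prod_range_one, show (0:ℕ)+1 = 1 from rfl]
        have k1 := key1 hℓ hu hv
        linear_combination k1
    | more n ih1 ih2 =>
        rw [htri (n+2), tri_det_rec, ← htri (n+1), ← htri n, ih1, ih2]
        beta_reduce
        rw [if_neg (show ¬(n+1 = 0) by omega)]
        simp only [Nat.add_sub_cancel]
        simp only [Finset.prod_range_succ]
        rw [show n+1+1 = n+2 from rfl]
        have k2 := key2 hℓ hu hv n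
        linear_combination (-(-1:ℝ)^n *
          (∏ j ∈ range n, coneSst ℓ (catenoidH ℓ j y) (catenoidH ℓ (j+1) y)) *
          coneSst ℓ (catenoidH ℓ n y) (catenoidH ℓ (n+1) y)) * k2
  rw [(hasDerivAt_catenoidH_s11 hu hv m).deriv]
  exact main m
end

section
/- (Lemma 3.2, part 2) Let ℓ > 0, m ≥ 1, and y > ℓ/2. If the derivative h'_{m,ℓ}(y) > 0, then h'_{n,ℓ}(y) > 0 for every n with 0 ≤ n ≤ m−1. -/
lemma hasDerivAt_cat (ℓ : ℝ) (n : ℕ) (y : ℝ) (ha : 0 < 2*y + ℓ) (hb : 0 < 2*y - ℓ) :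
    HasDerivAt (catenoidH ℓ n)
      ((((n:ℝ)+1)*((2*y+ℓ)^(2*n+1)*(2*y-ℓ) + (2*y+ℓ)*(2*y-ℓ)^(2*n+1))
        - n*((2*y+ℓ)^(2*n+2)+(2*y-ℓ)^(2*n+2)))
        / (2*((2*y+ℓ)*(2*y-ℓ))^(n+1))) y := by
  have hc : (0:ℝ) < 4*y^2 - ℓ^2 := by nlinarith
  have hD : (4 * (4*y^2 - ℓ^2)^n) ≠ 0 := by positivity
  have hu : HasDerivAt (fun y : ℝ => 2*y + ℓ) 2 y := by
    simpa using ((hasDerivAt_id y).const_mul 2).add_const ℓ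
  have hv : HasDerivAt (fun y : ℝ => 2*y - ℓ) 2 y := by
    simpa using ((hasDerivAt_id y).const_mul 2).sub_const ℓ
  have hw : HasDerivAt (fun y : ℝ => 4*y^2 - ℓ^2) (8*y) y := by
    have := (((hasDerivAt_pow 2 y)).const_mul 4).sub_const (ℓ^2)
    exact this.congr_deriv (by ring)
  have hN : HasDerivAt (fun y : ℝ => (2*y + ℓ)^(2*n+1) + (2*y - ℓ)^(2*n+1))
      ((2*n+1) * (2*y+ℓ)^(2*n) * 2 + (2*n+1) * (2*y-ℓ)^(2*n) * 2) y := by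
    exact (hu.pow (2*n+1)).add (hv.pow (2*n+1)) |>.congr_deriv (by push_cast; ring)
  have hDd : HasDerivAt (fun y : ℝ => 4 * (4*y^2 - ℓ^2)^n)
      (4 * ((n:ℝ) * (4*y^2 - ℓ^2)^(n-1) * (8*y))) y := by
    simpa [mul_assoc] using ((hw.pow n).const_mul 4)
  have := hN.div hDd hD
  refine HasDerivAt.congr_deriv (f := catenoidH ℓ n) this ?_
  rcases n with _ | k
  · field_simp
    ring
  · have hab : ((2*y+ℓ)*(2*y-ℓ)) = 4*y^2 - ℓ^2 := by ring
    rw [hab]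
    have h1 : (4*y^2-ℓ^2) ≠ 0 := ne_of_gt hc
    simp only [Nat.add_sub_cancel]
    rw [div_eq_div_iff (by positivity) (by positivity)]
    rw [← hab]
    push_cast
    ring

theorem stmt_13 (ℓ : ℝ) (hℓ : 0 < ℓ) (m : ℕ) (hm : 1 ≤ m) (y : ℝ) (hy : ℓ/2 < y)
    (hpos : 0 < deriv (catenoidH ℓ m) y) :
    ∀ n : ℕ, n ≤ m - 1 → 0 < deriv (catenoidH ℓ n) y := by
  have ha : 0 < 2*y + ℓ := by linarith
  have hb : 0 < 2*y - ℓ := by linarith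
  set a : ℝ := 2*y + ℓ with hA
  set b : ℝ := 2*y - ℓ with hB
  set F : ℕ → ℝ := fun n => ((n:ℝ)+1)*(a^(2*n+1)*b + a*b^(2*n+1)) - n*(a^(2*n+2)+b^(2*n+2))
    with hF
  have hderiv : ∀ n : ℕ, deriv (catenoidH ℓ n) y = F n / (2*(a*b)^(n+1)) :=
    fun n => (hasDerivAt_cat ℓ n y ha hb).deriv
  -- single-step: F (n+1) > 0 → F n > 0
  have hstep : ∀ n : ℕ, 0 < F (n+1) → 0 < F n := by
    intro n h
    have key : a*b*F n - F (n+1) = ((n:ℝ)+1)*(a-b)^2*(a^(2*n+2)+b^(2*n+2)) := by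
      simp only [hF]
      push_cast
      ring
    have hnn : 0 ≤ ((n:ℝ)+1)*(a-b)^2*(a^(2*n+2)+b^(2*n+2)) := by positivity
    have hab : 0 < a*b := mul_pos ha hb
    nlinarith [key, hnn, hab, h]
  -- F m > 0
  have hFm : 0 < F m := by
    rw [hderiv m] at hpos
    have hab : (0:ℝ) < 2*(a*b)^(m+1) := by positivity
    exact (div_pos_iff.mp hpos).resolve_right (by push_neg; intro h; linarith) |>.1
  -- all k ≤ m
  have hall : ∀ d k : ℕ, k + d = m → 0 < F k := by
    intro d
    induction d with
    | zero =>
      intro k hk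
      obtain rfl : k = m := by omega
      exact hFm
    | succ d ih => intro k hk; exact hstep k (ih (k+1) (by omega))
  intro n hn
  rw [hderiv n]
  exact div_pos (hall (m - n) n (by omega)) (by positivity)
end

section
/- (Remark 3.1) For every ℓ > 0, every n ∈ ℕ, and every y > ℓ/2, one has h_{n+1,ℓ}(y) > h_{n,ℓ}(y) and h'_{n,ℓ}(y) > h'_{n+1,ℓ}(y), where h' denotes the derivative with respect to y. -/
lemma pow_e1 (x : ℝ) (n : ℕ) : x^(2*n+1) = x*(x^n)^2 := by
  rw [pow_succ, mul_comm 2 n, pow_mul]; ring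

lemma pw (x : ℝ) (m k : ℕ) : x^(2*m+k) = x^k*(x^m)^2 := by
  rw [pow_add, mul_comm 2 m, pow_mul]; ring

lemma pw2 (x y : ℝ) (m k : ℕ) : (x*y)^(m+k) = (x^m*y^m)*(x*y)^k := by
  rw [pow_add, mul_pow]

lemma pow_e0 (x : ℝ) (n : ℕ) : x^(2*n) = (x^n)^2 := by
  rw [mul_comm 2 n, pow_mul]

lemma part1 (a b : ℝ) (hb : 0 < b) (hab : b < a) (n : ℕ) :
    (a^(2*n+1)+b^(2*n+1))/(4*(a*b)^n) < (a^(2*(n+1)+1)+b^(2*(n+1)+1))/(4*(a*b)^(n+1)) := by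
  have ha : 0 < a := hb.trans hab
  have hA : 0 < a^n := pow_pos ha n
  have hB : 0 < b^n := pow_pos hb n
  rw [← sub_pos]
  have key : (a^(2*(n+1)+1)+b^(2*(n+1)+1))/(4*(a*b)^(n+1)) - (a^(2*n+1)+b^(2*n+1))/(4*(a*b)^n)
      = (a-b)*(a*a^n-b*b^n)*(a*a^n+b*b^n)/(4*(a*b)*(a^n*b^n)) := by
    rw [pow_e1 a n, pow_e1 b n, pow_e1 a (n+1), pow_e1 b (n+1), pow_succ a n, pow_succ b n,
      pow_succ (a*b) n, mul_pow]
    field_simp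
    ring
  rw [key]
  have hpow : b*b^n < a*a^n := by
    have := pow_lt_pow_left₀ hab hb.le (Nat.succ_ne_zero n)
    rw [pow_succ, pow_succ] at this; nlinarith
  apply div_pos
  · apply mul_pos (mul_pos (by linarith) (by linarith)); positivity
  · positivity

lemma catenoidH_hasDerivAt (ℓ y : ℝ) (n : ℕ) (h : (4*y^2 - ℓ^2 : ℝ) ≠ 0) :
    HasDerivAt (catenoidH ℓ n)
      ((((2*(n:ℝ)+1)*(2*y+ℓ)^(2*n)*2 + (2*(n:ℝ)+1)*(2*y-ℓ)^(2*n)*2) * (4*(4*y^2-ℓ^2)^n)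
        - ((2*y+ℓ)^(2*n+1)+(2*y-ℓ)^(2*n+1)) * (4*((n:ℝ)*(4*y^2-ℓ^2)^(n-1)*(8*y))))
        / (4*(4*y^2-ℓ^2)^n)^2) y := by
  have h1 : HasDerivAt (fun y : ℝ => 2*y+ℓ) 2 y := by
    simpa using (((hasDerivAt_id y).const_mul 2).add_const ℓ)
  have h2 : HasDerivAt (fun y : ℝ => 2*y-ℓ) 2 y := by
    simpa using (((hasDerivAt_id y).const_mul 2).sub_const ℓ)
  have h3 : HasDerivAt (fun y : ℝ => 4*y^2-ℓ^2) (8*y) y := by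
    have := ((hasDerivAt_pow 2 y).const_mul 4).sub_const (ℓ^2)
    norm_num only at this
    refine this.congr_deriv ?_
    ring
  have hD : (4*(4*y^2-ℓ^2)^n : ℝ) ≠ 0 := mul_ne_zero (by norm_num) (pow_ne_zero _ h)
  have hnum := (h1.pow (2*n+1)).add (h2.pow (2*n+1))
  have hden := (h3.pow n).const_mul (4:ℝ)
  have hdiv := hnum.div hden hD
  have hcast : ((((2*(n:ℝ)+1)*(2*y+ℓ)^(2*n)*2 + (2*(n:ℝ)+1)*(2*y-ℓ)^(2*n)*2) * (4*(4*y^2-ℓ^2)^n)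
        - ((2*y+ℓ)^(2*n+1)+(2*y-ℓ)^(2*n+1)) * (4*((n:ℝ)*(4*y^2-ℓ^2)^(n-1)*(8*y))))
        / (4*(4*y^2-ℓ^2)^n)^2)
      = ((((2*n+1:ℕ):ℝ) * (2*y+ℓ)^(2*n+1-1) * 2 + ((2*n+1:ℕ):ℝ) * (2*y-ℓ)^(2*n+1-1) * 2)
          * (4*(4*y^2-ℓ^2)^n)
        - ((2*y+ℓ)^(2*n+1)+(2*y-ℓ)^(2*n+1)) * (4*((n:ℝ)*(4*y^2-ℓ^2)^(n-1)*(8*y))))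
        / (4*(4*y^2-ℓ^2)^n)^2 := by
    simp only [Nat.add_sub_cancel]
    push_cast
    ring
  rw [hcast]
  exact hdiv

lemma deriv_lt (a b y : ℝ) (hb : 0 < b) (hab : b < a) (hy : a + b = 4*y) (n : ℕ) :
    (((2*((n:ℝ)+1)+1)*a^(2*(n+1))*2 + (2*((n:ℝ)+1)+1)*b^(2*(n+1))*2) * (4*(a*b)^(n+1))
        - (a^(2*(n+1)+1)+b^(2*(n+1)+1)) * (4*(((n:ℝ)+1)*(a*b)^((n+1)-1)*(8*y))))
        / (4*(a*b)^(n+1))^2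
    < (((2*(n:ℝ)+1)*a^(2*n)*2 + (2*(n:ℝ)+1)*b^(2*n)*2) * (4*(a*b)^n)
        - (a^(2*n+1)+b^(2*n+1)) * (4*((n:ℝ)*(a*b)^(n-1)*(8*y))))
        / (4*(a*b)^n)^2 := by
  have ha : 0 < a := hb.trans hab
  have hy' : y = (a+b)/4 := by linarith
  subst hy'
  rw [← sub_pos]
  cases n with
  | zero =>
    norm_num
    rw [div_lt_one (by positivity)]
    nlinarith [mul_pos (pow_pos (sub_pos.2 hab) 2) (show (0:ℝ) < a^2+b^2 by positivity)]
  | succ m =>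
    simp only [Nat.add_sub_cancel]
    push_cast
    rw [show m+1+1 = m+2 from rfl]
    rw [show 2*(m+2)+1 = 2*m+5 from by ring, show 2*(m+2) = 2*m+4 from by ring,
      show 2*(m+1)+1 = 2*m+3 from by ring, show 2*(m+1) = 2*m+2 from by ring]
    rw [pw a m 2, pw a m 3, pw a m 4, pw a m 5, pw b m 2, pw b m 3, pw b m 4, pw b m 5,
      pw2 a b m 1, pw2 a b m 2, mul_pow a b m]
    have hC : (0:ℝ) < a^m := pow_pos ha m
    have hD : (0:ℝ) < b^m := pow_pos hb m
    have hba : (0:ℝ) < a - b := sub_pos.2 hab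
    have hpos : (0:ℝ) < ((m:ℝ)+2)*(a-b)^2*(a^4*(a^m)^2+b^4*(b^m)^2)/(2*a^3*b^3*(a^m*b^m)) := by
      apply div_pos
      · apply mul_pos (mul_pos (by positivity) (pow_pos hba 2)) (by positivity)
      · positivity
    refine lt_of_lt_of_eq hpos ?_
    field_simp
    ring

theorem stmt_14 (ℓ : ℝ) (hℓ : 0 < ℓ) (n : ℕ) (y : ℝ) (hy : ℓ/2 < y) :
    catenoidH ℓ n y < catenoidH ℓ (n+1) y ∧
    deriv (catenoidH ℓ (n+1)) y < deriv (catenoidH ℓ n) y := by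
  have hb : (0:ℝ) < 2*y - ℓ := by linarith
  have ha : (0:ℝ) < 2*y + ℓ := by linarith
  have hab : 2*y - ℓ < 2*y + ℓ := by linarith
  have hu : (4*y^2 - ℓ^2 : ℝ) ≠ 0 := by nlinarith
  have e : (4*y^2 - ℓ^2 : ℝ) = (2*y+ℓ)*(2*y-ℓ) := by ring
  constructor
  · unfold catenoidH
    rw [e]
    exact part1 _ _ hb hab n
  · rw [(catenoidH_hasDerivAt ℓ y n hu).deriv, (catenoidH_hasDerivAt ℓ y (n+1) hu).deriv]
    rw [e]
    push_cast
    exact deriv_lt _ _ y hb hab (by ring) n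
end

section
/- (Lemma 5.1) For every integer m ≥ 1, setting ℓ := 2/(2m+1), one has η_∞ > ν_{m,ℓ}, where η_∞ is the minimum value of the function c ↦ c·cosh(1/c) over c ∈ (0, ∞) and ν_{m,ℓ} is the minimum value of h_{m,ℓ} over (ℓ/2, ∞). -/
set_option maxHeartbeats 1000000

open Real

lemma exp_est5 {x : ℝ} (h : |x| ≤ 1) :
    |Real.exp x - (1 + x + x^2/2 + x^3/6 + x^4/24)| ≤ |x|^5/100 := by
  have h5 := Real.exp_bound h (n := 5) (by norm_num)
  have hs : (∑ i ∈ Finset.range 5, x ^ i / i.factorial)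
      = 1 + x + x^2/2 + x^3/6 + x^4/24 := by
    simp [Finset.sum_range_succ, Nat.factorial]
  rw [hs] at h5
  calc |Real.exp x - (1 + x + x^2/2 + x^3/6 + x^4/24)|
      ≤ |x|^5 * ((5:ℕ).succ / ((5:ℕ).factorial * 5)) := h5
    _ = |x|^5/100 := by norm_num [Nat.factorial]; ring

lemma exp_lb5 {x : ℝ} (h0 : 0 ≤ x) (h1 : x ≤ 1) :
    1 + x + x^2/2 + x^3/6 + x^4/24 - x^5/100 ≤ Real.exp x := by
  have h := abs_le.mp (exp_est5 (x := x) (by rw [abs_of_nonneg h0]; exact h1))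
  rw [abs_of_nonneg h0] at h; linarith [h.1]

lemma exp_ub5 {x : ℝ} (h0 : 0 ≤ x) (h1 : x ≤ 1) :
    Real.exp x ≤ 1 + x + x^2/2 + x^3/6 + x^4/24 + x^5/100 := by
  have h := abs_le.mp (exp_est5 (x := x) (by rw [abs_of_nonneg h0]; exact h1))
  rw [abs_of_nonneg h0] at h; linarith [h.2]

lemma exp_neg_lb5 {x : ℝ} (h0 : 0 ≤ x) (h1 : x ≤ 1) :
    1 - x + x^2/2 - x^3/6 + x^4/24 - x^5/100 ≤ Real.exp (-x) := by
  have h := abs_le.mp (exp_est5 (x := -x) (by rw [abs_neg, abs_of_nonneg h0]; exact h1))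
  rw [abs_neg, abs_of_nonneg h0] at h
  have := h.1; nlinarith [this]

lemma exp_neg_ub5 {x : ℝ} (h0 : 0 ≤ x) (h1 : x ≤ 1) :
    Real.exp (-x) ≤ 1 - x + x^2/2 - x^3/6 + x^4/24 + x^5/100 := by
  have h := abs_le.mp (exp_est5 (x := -x) (by rw [abs_neg, abs_of_nonneg h0]; exact h1))
  rw [abs_neg, abs_of_nonneg h0] at h
  have := h.2; nlinarith [this]

lemma exp_ub3 {x : ℝ} (h0 : 0 ≤ x) (h1 : x ≤ 1) :
    Real.exp x ≤ 1 + x + x^2/2 + x^3 * (2/9) := by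
  have h3 := Real.exp_bound (x := x) (by rw [abs_of_nonneg h0]; exact h1) (n := 3) (by norm_num)
  have hs : (∑ i ∈ Finset.range 3, x ^ i / i.factorial) = 1 + x + x^2/2 := by
    simp [Finset.sum_range_succ, Nat.factorial]
  rw [hs, abs_of_nonneg h0] at h3
  have h := abs_le.mp h3
  have h2 := h.2
  norm_num [Nat.factorial] at h2; linarith

lemma e23_lb : (1.945 : ℝ) ≤ Real.exp (2/3) := by
  have h := exp_lb5 (x := 2/3) (by norm_num) (by norm_num)
  norm_num at h ⊢; linarith

lemma e23_ub : Real.exp (2/3) ≤ 1.948 := by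
  have h := exp_ub5 (x := 2/3) (by norm_num) (by norm_num)
  norm_num at h ⊢; linarith

lemma e35_lb : (1.8206 : ℝ) ≤ Real.exp (3/5) := by
  have h := exp_lb5 (x := 3/5) (by norm_num) (by norm_num)
  norm_num at h ⊢; linarith

lemma e35_ub : Real.exp (3/5) ≤ 1.8222 := by
  have h := exp_ub5 (x := 3/5) (by norm_num) (by norm_num)
  norm_num at h ⊢; linarith

lemma e43_bounds : (3.783 : ℝ) ≤ Real.exp (4/3) ∧ Real.exp (4/3) ≤ 3.795 := by
  have h : Real.exp (4/3) = Real.exp (2/3) * Real.exp (2/3) := by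
    rw [← Real.exp_add]; norm_num
  constructor <;> nlinarith [e23_lb, e23_ub]

lemma e65_bounds : (3.3145 : ℝ) ≤ Real.exp (6/5) ∧ Real.exp (6/5) ≤ 3.3205 := by
  have h : Real.exp (6/5) = Real.exp (3/5) * Real.exp (3/5) := by
    rw [← Real.exp_add]; norm_num
  constructor <;> nlinarith [e35_lb, e35_ub]

lemma N2 : Real.cosh (4/3) ≤ 4/3 * Real.sinh (4/3) := by
  rw [Real.cosh_eq, Real.sinh_eq, Real.exp_neg]
  have hE := e43_bounds.1
  have hpos := Real.exp_pos (4/3 : ℝ)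
  have hinv : Real.exp (4/3) * (Real.exp (4/3))⁻¹ = 1 := mul_inv_cancel₀ (ne_of_gt hpos)
  nlinarith [inv_pos.mpr hpos]

lemma N1 : (5/6 : ℝ) * Real.cosh (6/5) < 3/4 * Real.cosh (4/3) := by
  rw [Real.cosh_eq, Real.cosh_eq, Real.exp_neg, Real.exp_neg]
  have h4 := e43_bounds; have h6 := e65_bounds
  have hp4 := Real.exp_pos (4/3 : ℝ); have hp6 := Real.exp_pos (6/5 : ℝ)
  have hi4 : Real.exp (4/3) * (Real.exp (4/3))⁻¹ = 1 := mul_inv_cancel₀ (ne_of_gt hp4)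
  have hi6 : Real.exp (6/5) * (Real.exp (6/5))⁻¹ = 1 := mul_inv_cancel₀ (ne_of_gt hp6)
  have hiv4 : (Real.exp (4/3))⁻¹ ≤ (3.783 : ℝ)⁻¹ :=
    inv_anti₀ (by norm_num) h4.1
  have hiv6 : (Real.exp (6/5))⁻¹ ≤ (3.3145 : ℝ)⁻¹ :=
    inv_anti₀ (by norm_num) h6.1
  have hiv4' : (0:ℝ) < (Real.exp (4/3))⁻¹ := by positivity
  have hiv6' : (0:ℝ) < (Real.exp (6/5))⁻¹ := by positivity
  nlinarith

lemma eta_lb {c : ℝ} (hc : 0 < c) (hc34 : c ≤ 3/4) :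
    3/4 * Real.cosh (4/3) ≤ c * Real.cosh (1/c) := by
  have hu : (4/3 : ℝ) ≤ 1/c := by
    rw [le_div_iff₀ hc]; linarith
  set d := 1/c - 4/3 with hdd
  have hd0 : 0 ≤ d := by rw [hdd]; linarith
  have h1 : Real.cosh (1/c) = Real.cosh (4/3) * Real.cosh d + Real.sinh (4/3) * Real.sinh d := by
    rw [← Real.cosh_add]; norm_num [hdd]
  have h2 : 1 ≤ Real.cosh d := Real.one_le_cosh d
  have h3 : d ≤ Real.sinh d := by
    rcases eq_or_lt_of_le hd0 with h | h
    · simp [← h]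
    · exact (Real.self_lt_sinh_iff.mpr h).le
  have h4 : 0 < Real.sinh (4/3) := Real.sinh_pos_iff.mpr (by norm_num)
  have h5 : Real.cosh (4/3) + Real.sinh (4/3) * d ≤ Real.cosh (1/c) := by
    rw [h1]
    nlinarith [mul_nonneg (Real.cosh_pos (4/3 : ℝ)).le (sub_nonneg.mpr h2),
      mul_le_mul_of_nonneg_left h3 h4.le]
  have h6 : c * (Real.cosh (4/3) + Real.sinh (4/3) * d) ≤ c * Real.cosh (1/c) :=
    mul_le_mul_of_nonneg_left h5 hc.le
  have h7 : c * d = 1 - 4/3 * c := by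
    rw [hdd]; field_simp
  nlinarith [N2, Real.cosh_pos (4/3 : ℝ)]

lemma core {x M : ℝ} (hx0 : 0 < x) (hx1 : x ≤ 0.49) (hM : 3 ≤ M)
    (hMt : M * Real.tanh x ≤ 4/3) :
    Real.cosh (M * x) < Real.cosh x * Real.cosh (M * Real.tanh x) := by
  have hT : Real.tanh x = Real.sinh x / Real.cosh x := Real.tanh_eq_sinh_div_cosh x
  rw [hT] at hMt ⊢
  set S := Real.sinh x with hSdef
  set C := Real.cosh x with hCdef
  clear_value S C
  have hC0 : 0 < C := by rw [hCdef]; exact Real.cosh_pos x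
  have hS0 : 0 < S := by rw [hSdef]; exact Real.sinh_pos_iff.mpr hx0
  have hx1' : x ≤ 1 := le_trans hx1 (by norm_num)
  have hEl := exp_lb5 hx0.le hx1'
  have hEu := exp_ub5 hx0.le hx1'
  have hNl := exp_neg_lb5 hx0.le hx1'
  have hNu := exp_neg_ub5 hx0.le hx1'
  have hSeq : S = (Real.exp x - Real.exp (-x))/2 := by rw [hSdef]; exact Real.sinh_eq x
  have hCeq : C = (Real.exp x + Real.exp (-x))/2 := by rw [hCdef]; exact Real.cosh_eq x
  have hS_lb : x + x^3/6 - x^5/100 ≤ S := by rw [hSeq]; linarith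
  have hS_ub : S ≤ x + x^3/6 + x^5/100 := by rw [hSeq]; linarith
  have hC_ub : C ≤ 1 + x^2/2 + x^4/24 + x^5/100 := by rw [hCeq]; linarith
  have hC_lb : 1 + x^2/2 ≤ C := by
    rw [hCeq]
    nlinarith [pow_nonneg hx0.le 4, pow_nonneg hx0.le 5]
  have hx2 : x^2 ≤ 0.2401 := by nlinarith
  have hx3 : x^3 ≤ 0.117649 := by
    calc x^3 = x * x^2 := by ring
      _ ≤ 0.49 * 0.2401 := by
          apply mul_le_mul hx1 hx2 (sq_nonneg x) (by norm_num)
      _ = 0.117649 := by norm_num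
  have hSx : x ≤ S := by nlinarith [pow_nonneg hx0.le 3]
  set T := S / C with hTdef
  clear_value T
  have hT0 : 0 < T := by rw [hTdef]; exact div_pos hS0 hC0
  set D := M * (x - T) with hDdef
  clear_value D
  have hxC : x * C ≤ x + x^3/2 + x^5/24 + x^6/100 := by
    calc x * C ≤ x * (1 + x^2/2 + x^4/24 + x^5/100) :=
          mul_le_mul_of_nonneg_left hC_ub hx0.le
      _ = x + x^3/2 + x^5/24 + x^6/100 := by ring
  have h5 : x^5 ≤ 0.2401 * x^3 := by
    calc x^5 = x^3 * x^2 := by ring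
      _ ≤ x^3 * 0.2401 := mul_le_mul_of_nonneg_left hx2 (pow_nonneg hx0.le 3)
      _ = 0.2401 * x^3 := by ring
  have h6 : x^6 ≤ 0.117649 * x^3 := by
    calc x^6 = x^3 * x^3 := by ring
      _ ≤ x^3 * 0.117649 := mul_le_mul_of_nonneg_left hx3 (pow_nonneg hx0.le 3)
      _ = 0.117649 * x^3 := by ring
  have hnum : x * C - S ≤ 0.347 * x^3 := by linarith
  have hxC_lb : x + x^3/2 ≤ x * C := by
    calc x + x^3/2 = x * (1 + x^2/2) := by ring
      _ ≤ x * C := mul_le_mul_of_nonneg_left hC_lb hx0.le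
  have hxT : T < x := by
    rw [hTdef, div_lt_iff₀ hC0]
    linarith [pow_pos hx0 3]
  have hD0 : 0 < D := by rw [hDdef]; exact mul_pos (by linarith) (by linarith)
  have hMT : M * T ≤ 4/3 := hMt
  have hDb : D ≤ 0.463 * x^2 := by
    have h1 : D ≤ (4/3) * ((x - T)/T) := by
      rw [hDdef]
      have hM' : M ≤ (4/3) / T := by rw [le_div_iff₀ hT0]; linarith
      have := mul_le_mul_of_nonneg_right hM' (by linarith : (0:ℝ) ≤ x - T)
      calc M * (x - T) ≤ (4/3)/T * (x - T) := this
        _ = (4/3) * ((x - T)/T) := by ring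
    have h2 : (x - T)/T = (x*C - S)/S := by
      rw [hTdef]
      field_simp
    have h3 : (x*C - S)/S ≤ (0.347 * x^3)/x :=
      div_le_div₀ (by positivity) hnum hx0 hSx
    have h4 : (0.347 * x^3)/x = 0.347 * x^2 := by
      field_simp
    calc D ≤ (4/3) * ((x - T)/T) := h1
      _ = (4/3) * ((x*C - S)/S) := by rw [h2]
      _ ≤ (4/3) * (0.347 * x^2) := by
          rw [← h4]; exact mul_le_mul_of_nonneg_left h3 (by norm_num)
      _ ≤ 0.463 * x^2 := by linarith [sq_nonneg x]
  have hD1 : D ≤ 0.112 := by linarith [hDb, mul_le_mul_of_nonneg_left hx2 (by norm_num : (0:ℝ) ≤ 0.463)]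
  have hexpD : Real.exp D ≤ 1 + D + D^2/2 + D^3*(2/9) := exp_ub3 hD0.le (by linarith)
  have hkey : Real.exp D < C := by
    have hD2 : D^2 ≤ 0.463 * x^2 * D := by
      calc D^2 = D * D := by ring
        _ ≤ (0.463 * x^2) * D := mul_le_mul_of_nonneg_right hDb hD0.le
        _ = 0.463 * x^2 * D := by ring
    have hD3' : D^3 ≤ 0.112 * D^2 := by
      calc D^3 = D * D^2 := by ring
        _ ≤ 0.112 * D^2 := mul_le_mul_of_nonneg_right hD1 (sq_nonneg D)
    have hx2D : x^2 * D ≤ x^2 * 0.112 := mul_le_mul_of_nonneg_left hD1 (sq_nonneg x)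
    have hD2' : D^2 ≤ 0.051856 * x^2 := by linarith
    have hx2pos : 0 < x^2 := pow_pos hx0 2
    linarith
  have hMx : M * x = M * T + D := by rw [hDdef]; ring
  rw [hMx, Real.cosh_add]
  have hsinhD : 0 < Real.sinh D := Real.sinh_pos_iff.mpr hD0
  have hcoshMT : 0 < Real.cosh (M*T) := Real.cosh_pos _
  have hsc : Real.sinh (M*T) < Real.cosh (M*T) := by
    nlinarith [Real.cosh_sub_sinh (M*T), Real.exp_pos (-(M*T))]
  have hcs : Real.cosh D + Real.sinh D = Real.exp D := Real.cosh_add_sinh D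
  calc Real.cosh (M*T) * Real.cosh D + Real.sinh (M*T) * Real.sinh D
      < Real.cosh (M*T) * Real.cosh D + Real.cosh (M*T) * Real.sinh D := by
        have h := mul_lt_mul_of_pos_right hsc hsinhD
        linarith
    _ = Real.cosh (M*T) * Real.exp D := by rw [← hcs]; ring
    _ < Real.cosh (M*T) * C := by exact mul_lt_mul_of_pos_left hkey hcoshMT
    _ = C * Real.cosh (M*T) := by ring

lemma ident (m : ℕ) (c x t : ℝ) (hc : 0 < c)
    (ht : Real.tanh x = t) (hℓ : (2*(m:ℝ)+1) * c * t = 1) :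
    catenoidH (2/(2*(m:ℝ)+1)) m c = c * Real.cosh ((2*(m:ℝ)+1)*x) / Real.cosh x := by
  have hM0 : (0:ℝ) < 2*(m:ℝ)+1 := by positivity
  set E := Real.exp x with hEdef
  set C := Real.cosh x with hCdef
  set S := Real.sinh x with hSdef
  have hE0 : 0 < E := Real.exp_pos x
  have hC0 : 0 < C := Real.cosh_pos x
  have hCt : C * t = S := by
    rw [Real.tanh_eq_sinh_div_cosh] at ht
    field_simp at ht
    linarith [ht]
  have hE : C + S = E := Real.cosh_add_sinh x
  have hEE : E * (C - S) = 1 := by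
    rw [Real.cosh_sub_sinh x, ← Real.exp_add]
    simp
  have hℓeq : 2/(2*(m:ℝ)+1) = 2*c*t := by
    rw [div_eq_iff hM0.ne']
    linear_combination -2*hℓ
  have h2c_add : 2*c + 2*c*t = 2*c*E/C := by
    rw [eq_div_iff hC0.ne']
    linear_combination 2*c*hCt + 2*c*hE
  have h2c_sub : 2*c - 2*c*t = 2*c/(E*C) := by
    rw [eq_div_iff (by positivity : (E*C) ≠ 0)]
    linear_combination 2*c*hEE - 2*c*E*hCt
  have hsq : 4*c^2 - (2*c*t)^2 = 4*c^2/C^2 := by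
    have expand : 4*c^2 - (2*c*t)^2 = (2*c + 2*c*t) * (2*c - 2*c*t) := by ring
    rw [expand, h2c_add, h2c_sub]
    field_simp
    ring
  have hcosh : Real.cosh ((2*(m:ℝ)+1)*x) = (E^(2*m+1) + (E⁻¹)^(2*m+1))/2 := by
    rw [Real.cosh_eq]
    have h1 : (2*(m:ℝ)+1)*x = ((2*m+1 : ℕ):ℝ)*x := by push_cast; ring
    have e1 : Real.exp (((2*m+1 : ℕ):ℝ)*x) = E^(2*m+1) := Real.exp_nat_mul x (2*m+1)
    have e2 : Real.exp (-(((2*m+1 : ℕ):ℝ)*x)) = (E⁻¹)^(2*m+1) := by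
      rw [Real.exp_neg, e1, inv_pow]
    rw [h1, e1, e2]
  show ((2*c + 2/(2*(m:ℝ)+1))^(2*m+1) + (2*c - 2/(2*(m:ℝ)+1))^(2*m+1))
      / (4 * (4*c^2 - (2/(2*(m:ℝ)+1))^2)^m) = c * Real.cosh ((2*(m:ℝ)+1)*x) / C
  rw [hℓeq, h2c_add, h2c_sub, hsq, hcosh]
  rw [div_pow, div_pow, div_pow]
  rw [mul_pow]
  field_simp
  rw [show (c^2*(4:ℝ))^m = (2*c)^(2*m) from by
    rw [show c^2*(4:ℝ) = (2*c)^2 from by ring, ← pow_mul]]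
  rw [one_div, inv_pow]; field_simp; ring

theorem stmt_16 (m : ℕ) (hm : 1 ≤ m) (η ν : ℝ)
    (hη : IsLeast ((fun c : ℝ => c * Real.cosh (1/c)) '' Set.Ioi 0) η)
    (hν : IsLeast
      (catenoidH (2 / (2*(m:ℝ)+1)) m '' Set.Ioi ((2 / (2*(m:ℝ)+1)) / 2)) ν) :
    ν < η := by
  obtain ⟨c, hc0, hceq0⟩ := hη.1
  have hceq : c * Real.cosh (1/c) = η := hceq0
  have hc0' : (0:ℝ) < c := hc0
  have hm1 : (1:ℝ) ≤ (m:ℝ) := by exact_mod_cast hm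
  have hM3 : (3:ℝ) ≤ 2*(m:ℝ)+1 := by linarith
  have hM0 : (0:ℝ) < 2*(m:ℝ)+1 := by linarith
  -- upper bound on η
  have hηub : η ≤ 5/6 * Real.cosh (6/5) := by
    have h := hη.2 ⟨5/6, by norm_num, rfl⟩
    have h2 : (5/6 : ℝ) * Real.cosh (1/(5/6)) = 5/6 * Real.cosh (6/5) := by norm_num
    calc η ≤ (5/6 : ℝ) * Real.cosh (1/(5/6)) := h
      _ = 5/6 * Real.cosh (6/5) := h2
  -- lower bound on c
  have hc34 : 3/4 < c := by
    by_contra h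
    push_neg at h
    have h1 := eta_lb hc0' h
    rw [hceq] at h1
    linarith [N1]
  -- set up t and x
  set t : ℝ := 1/((2*(m:ℝ)+1)*c) with htdef
  have hMc : 9/4 < (2*(m:ℝ)+1) * c := by nlinarith
  have ht0 : 0 < t := by rw [htdef]; positivity
  have ht49 : t ≤ 4/9 := by
    rw [htdef, div_le_iff₀ (by linarith)]
    linarith
  have h1t : 0 < 1 - t := by linarith
  have hfrac : 1 < (1+t)/(1-t) := by
    rw [lt_div_iff₀ h1t]; linarith
  set x : ℝ := Real.log ((1+t)/(1-t)) / 2 with hxdef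
  have hx0 : 0 < x := div_pos (Real.log_pos hfrac) two_pos
  have he2x : Real.exp x * Real.exp x = (1+t)/(1-t) := by
    rw [← Real.exp_add, hxdef]
    rw [show Real.log ((1+t)/(1-t))/2 + Real.log ((1+t)/(1-t))/2
        = Real.log ((1+t)/(1-t)) from by ring]
    exact Real.exp_log (by positivity)
  have htanh : Real.tanh x = t := by
    rw [Real.tanh_eq_sinh_div_cosh, Real.sinh_eq, Real.cosh_eq, Real.exp_neg]
    have hE0 : (0:ℝ) < Real.exp x := Real.exp_pos x
    have hE2 : Real.exp x * Real.exp x * (1-t) = 1+t := by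
      rw [he2x]; field_simp
    field_simp
    nlinarith [hE2]
  have hx49 : x ≤ 0.49 := by
    by_contra h
    push_neg at h
    have h1 : Real.exp x * Real.exp x ≤ 13/5 := by
      rw [he2x, div_le_iff₀ h1t]; linarith
    have h2 : Real.exp (49/50) ≤ Real.exp x * Real.exp x := by
      rw [← Real.exp_add]
      exact Real.exp_le_exp.mpr (by linarith)
    have h3 := exp_lb5 (x := 49/50) (by norm_num) (by norm_num)
    have h4 : (2.61 : ℝ) ≤ Real.exp (49/50) := by norm_num at h3 ⊢; linarith
    linarith
  have hMt : (2*(m:ℝ)+1) * Real.tanh x = 1/c := by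
    rw [htanh, htdef]
    field_simp
  have hMt43 : (2*(m:ℝ)+1) * Real.tanh x ≤ 4/3 := by
    rw [hMt, div_le_iff₀ hc0']; linarith
  have hcore := core hx0 hx49 hM3 hMt43
  have hℓ : (2*(m:ℝ)+1) * c * t = 1 := by
    rw [htdef]; field_simp
  have hident := ident m c x t hc0' htanh hℓ
  -- ν ≤ h(c)
  have hcmem : c ∈ Set.Ioi ((2 / (2*(m:ℝ)+1)) / 2) := by
    simp only [Set.mem_Ioi]
    have : (2 / (2*(m:ℝ)+1)) / 2 = 1/(2*(m:ℝ)+1) := by ring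
    rw [this, div_lt_iff₀ hM0]
    nlinarith
  have hνle : ν ≤ catenoidH (2 / (2*(m:ℝ)+1)) m c := hν.2 ⟨c, hcmem, rfl⟩
  -- h(c) < η
  have hC0 : 0 < Real.cosh x := Real.cosh_pos x
  have hlt : catenoidH (2 / (2*(m:ℝ)+1)) m c < η := by
    rw [hident, ← hceq, ← hMt]
    rw [div_lt_iff₀ hC0]
    calc c * Real.cosh ((2*(m:ℝ)+1)*x)
        < c * (Real.cosh x * Real.cosh ((2*(m:ℝ)+1) * Real.tanh x)) :=
          mul_lt_mul_of_pos_left hcore hc0'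
      _ = c * Real.cosh ((2*(m:ℝ)+1) * Real.tanh x) * Real.cosh x := by ring
  linarith
end

section
/- (The case m = 1) Let a > 0 and ℓ > 0, and consider T_{a,1,ℓ}(y₀) := y₀·ℓ + (y₀ + a)·√((a − y₀)² + ℓ²) for y₀ > 0. Then y₀ > 0 satisfies dT_{a,1,ℓ}/dy₀(y₀) = 0 if and only if y₀ > ℓ/2 and a = y₀ + 4ℓ²y₀/(4y₀² − ℓ²). -/
theorem stmt_17 (a ℓ : ℝ) (ha : 0 < a) (hℓ : 0 < ℓ) (y₀ : ℝ) (hy₀ : 0 < y₀) :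
    deriv (fun y : ℝ => y * ℓ + (y + a) * Real.sqrt ((a - y)^2 + ℓ^2)) y₀ = 0 ↔
      (ℓ/2 < y₀ ∧ a = y₀ + 4*ℓ^2*y₀ / (4*y₀^2 - ℓ^2)) := by
  have hq0 : (0:ℝ) < (a - y₀)^2 + ℓ^2 := by positivity
  set r := Real.sqrt ((a - y₀)^2 + ℓ^2) with hrdef
  have hr : 0 < r := Real.sqrt_pos.mpr hq0
  have hr2 : r^2 = (a - y₀)^2 + ℓ^2 := Real.sq_sqrt hq0.le
  have h1 : HasDerivAt (fun y : ℝ => (a - y)^2 + ℓ^2) (2*(a - y₀)*(-1)) y₀ := by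
    have h := (((hasDerivAt_id y₀).const_sub a).pow 2).add_const (ℓ^2)
    simpa using h
  have h2 := h1.sqrt hq0.ne'
  have h3 := ((hasDerivAt_id y₀).add_const a).mul h2
  have h4 := ((hasDerivAt_id y₀).mul_const ℓ).add h3
  have h4' : HasDerivAt (fun y : ℝ => y * ℓ + (y + a) * Real.sqrt ((a - y)^2 + ℓ^2))
      (1 * ℓ + (1 * Real.sqrt ((a - y₀)^2 + ℓ^2) +
        (y₀ + a) * (2 * (a - y₀) * (-1) / (2 * Real.sqrt ((a - y₀)^2 + ℓ^2))))) y₀ := h4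
  have hd : deriv (fun y : ℝ => y * ℓ + (y + a) * Real.sqrt ((a - y)^2 + ℓ^2)) y₀
      = ℓ + (r + (y₀ + a) * ((y₀ - a) / r)) := by
    rw [h4'.deriv]
    field_simp
    ring
  rw [hd]
  constructor
  · intro h
    have key : ℓ * r = 2*a*y₀ - 2*y₀^2 - ℓ^2 := by
      have h0 : (ℓ + (r + (y₀ + a) * ((y₀ - a) / r))) * r = 0 := by rw [h]; ring
      have h0' : ℓ * r + r^2 + (y₀ + a) * (y₀ - a) = 0 := by
        field_simp at h0
        nlinarith [h0]
      nlinarith [hr2, h0']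
    have hB : 0 < 2*y₀*(a - y₀) - ℓ^2 := by nlinarith [mul_pos hℓ hr]
    have hu : 0 < a - y₀ := by nlinarith [sq_nonneg ℓ]
    have hsq : ℓ^2 * ((a - y₀)^2 + ℓ^2) = (2*a*y₀ - 2*y₀^2 - ℓ^2)^2 := by
      rw [← hr2, ← key]; ring
    have hfac : (a - y₀) * ((4*y₀^2 - ℓ^2)*(a - y₀) - 4*ℓ^2*y₀) = 0 := by
      linear_combination -hsq
    have hfac2 : (4*y₀^2 - ℓ^2)*(a - y₀) = 4*ℓ^2*y₀ := by
      rcases mul_eq_zero.mp hfac with h' | h'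
      · exfalso; linarith
      · linarith
    have hden : 0 < 4*y₀^2 - ℓ^2 := by
      rcases lt_trichotomy (4*y₀^2 - ℓ^2) 0 with h' | h' | h'
      · exfalso; nlinarith [mul_pos hℓ hℓ, mul_pos hy₀ hℓ]
      · exfalso; rw [h'] at hfac2
        have : 0 < ℓ^2*y₀ := by positivity
        nlinarith
      · exact h'
    constructor
    · nlinarith
    · rw [← sub_eq_iff_eq_add', eq_div_iff hden.ne']
      linarith [hfac2]
  · rintro ⟨hhalf, hae⟩
    have hden : 0 < 4*y₀^2 - ℓ^2 := by nlinarith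
    have hu : a - y₀ = 4*ℓ^2*y₀/(4*y₀^2 - ℓ^2) := by rw [hae]; ring
    have hr_eq : r = ℓ*(4*y₀^2 + ℓ^2)/(4*y₀^2 - ℓ^2) := by
      rw [hrdef, show (a - y₀)^2 + ℓ^2 = (ℓ*(4*y₀^2 + ℓ^2)/(4*y₀^2 - ℓ^2))^2 by
        rw [hu]; field_simp; ring]
      exact Real.sqrt_sq (by positivity)
    rw [hr_eq, hae]
    have hnum : 0 < ℓ*(4*y₀^2 + ℓ^2)/(4*y₀^2 - ℓ^2) := by positivity
    field_simp
    ring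
end
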